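/- arXiv:2012.00808 — 9 statements merged into one kernel-verified Lean document; each statement's English description precedes it below -/
import Mathlib

section
/- Let G be a finite simple graph on n vertices and let k be an integer with 1 ≤ k ≤ n−1. Then the Laplacian spectrum of G is contained in the Laplacian spectrum of the k-token graph F_k(G): for every real number λ, the multiplicity of λ as an eigenvalue of the Laplacian matrix of F_k(G) is at least the multiplicity of λ as an eigenvalue of the Laplacian matrix of G. -/
open Finset Matrix
open scoped symmDiff

/-- The `k`-token graph of a graph `G`: vertices are the `k`-subsets of the vertex set,
two subsets `A`, `B` being adjacent iff their symmetric difference is a pair `{a, b}`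
with `a ∈ A`, `b ∈ B` and `a` adjacent to `b` in `G`. -/
def tokenGraph {V : Type*} [DecidableEq V] (G : SimpleGraph V) (k : ℕ) :
    SimpleGraph {s : Finset V // s.card = k} where
  Adj A B := ∃ a b, a ∈ A.1 ∧ b ∈ B.1 ∧ G.Adj a b ∧ A.1 ∆ B.1 = {a, b}
  symm := by
    constructor
    rintro A B ⟨a, b, ha, hb, hab, hd⟩
    exact ⟨b, a, hb, ha, hab.symm, by rw [symmDiff_comm, hd, Finset.pair_comm]⟩
  loopless := by
    constructor
    rintro A ⟨a, b, ha, hb, hab, hd⟩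
    rw [symmDiff_self] at hd
    exact Finset.insert_ne_empty a {b} hd.symm

/-- The Laplacian matrix (over `ℝ`) of a finite simple graph: `L = D - A`. -/
noncomputable def Lap {V : Type*} [Fintype V] [DecidableEq V] (G : SimpleGraph V) :
    Matrix V V ℝ :=
  letI := Classical.decRel G.Adj
  G.lapMatrix ℝ

section Aux

variable {V : Type*} [Fintype V] [DecidableEq V]

lemma Lap_eq (G : SimpleGraph V) [inst : DecidableRel G.Adj] : Lap G = G.lapMatrix ℝ := by
  unfold Lap
  congr!

lemma Lap_mulVec (G : SimpleGraph V) [inst : DecidableRel G.Adj] (f : V → ℝ) (a : V) :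
    (Lap G *ᵥ f) a = ∑ b ∈ G.neighborFinset a, (f a - f b) := by
  rw [Lap_eq, SimpleGraph.lapMatrix_mulVec_apply, Finset.sum_sub_distrib, Finset.sum_const,
    SimpleGraph.degree, nsmul_eq_mul]

lemma card_swapset {A : Finset V} {a b : V} (ha : a ∈ A) (hb : b ∉ A) :
    (insert b (A.erase a)).card = A.card := by
  rw [Finset.card_insert_of_notMem (fun h => hb (Finset.mem_of_mem_erase h)),
    Finset.card_erase_of_mem ha]
  have := Finset.card_pos.mpr ⟨a, ha⟩
  omega

lemma symmDiff_swapset {A : Finset V} {a b : V} (ha : a ∈ A) (hb : b ∉ A) :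
    A ∆ (insert b (A.erase a)) = {a, b} := by
  have hab : a ≠ b := fun h => hb (h ▸ ha)
  ext x
  simp only [Finset.mem_symmDiff, Finset.mem_insert, Finset.mem_erase, Finset.mem_singleton]
  by_cases hxa : x = a <;> by_cases hxb : x = b <;> subst_vars <;> simp_all <;> tauto

lemma swapset_inj {A : Finset V} {a b a' b' : V} (ha : a ∈ A) (hb : b ∉ A) (ha' : a' ∈ A)
    (hb' : b' ∉ A) (h : insert b (A.erase a) = insert b' (A.erase a')) : a = a' ∧ b = b' := by
  have hbb : b = b' := by
    have hmem : b ∈ insert b' (A.erase a') := h ▸ Finset.mem_insert_self b _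
    rcases Finset.mem_insert.mp hmem with h1 | h1
    · exact h1
    · exact absurd (Finset.mem_of_mem_erase h1) hb
  refine ⟨?_, hbb⟩
  have hna : a ∉ insert b (A.erase a) := by
    simp only [Finset.mem_insert, Finset.mem_erase, not_or]
    exact ⟨fun h' => hb (h' ▸ ha), fun h' => (h'.1 rfl).elim⟩
  rw [h] at hna
  simp only [Finset.mem_insert, Finset.mem_erase, not_or, not_and] at hna
  by_contra hne
  exact (hna.2 hne) ha

/-- Structure of token graph adjacency. -/
lemma tokenAdj_structure {G : SimpleGraph V} {k : ℕ} {A B : {s : Finset V // s.card = k}}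
    (h : (tokenGraph G k).Adj A B) :
    ∃ a b, a ∈ A.1 ∧ b ∉ A.1 ∧ G.Adj a b ∧ B.1 = insert b (A.1.erase a) := by
  obtain ⟨a, b, ha, hb, hab, hd⟩ := h
  have hanb : a ∉ B.1 := by
    have : a ∈ A.1 ∆ B.1 := by rw [hd]; exact Finset.mem_insert_self a _
    rw [Finset.mem_symmDiff] at this
    rcases this with ⟨_, h2⟩ | ⟨_, h2⟩
    · exact h2
    · exact absurd ha h2
  have hbna : b ∉ A.1 := by
    have : b ∈ A.1 ∆ B.1 := by rw [hd]; exact Finset.mem_insert_of_mem (Finset.mem_singleton_self b)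
    rw [Finset.mem_symmDiff] at this
    rcases this with ⟨_, h2⟩ | ⟨_, h2⟩
    · exact absurd hb h2
    · exact h2
  refine ⟨a, b, ha, hbna, hab, ?_⟩
  ext x
  have hx : x ∈ A.1 ∆ B.1 ↔ x = a ∨ x = b := by
    rw [hd]; simp
  rw [Finset.mem_symmDiff] at hx
  simp only [Finset.mem_insert, Finset.mem_erase]
  constructor
  · intro hxB
    by_cases hxA : x ∈ A.1
    · have : ¬(x = a ∨ x = b) := by
        rw [← hx]; push_neg; exact ⟨fun _ => hxB, fun _ => hxA⟩
      push_neg at this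
      exact Or.inr ⟨this.1, hxA⟩
    · have : x = a ∨ x = b := hx.mp (Or.inr ⟨hxB, hxA⟩)
      rcases this with h' | h'
      · exact absurd (h' ▸ ha) hxA
      · exact Or.inl h'
  · rintro (rfl | ⟨hxa, hxA⟩)
    · exact hb
    · by_contra hxB
      rcases hx.mp (Or.inl ⟨hxA, hxB⟩) with h' | h'
      · exact hxa h'
      · exact hbna (h' ▸ hxA)

/-- Antisymmetric sums over symmetric pair-sets vanish. -/
lemma antisym_sum_zero (G : SimpleGraph V) [DecidableRel G.Adj] (f : V → ℝ) (A : Finset V) :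
    ∑ p ∈ (A ×ˢ A).filter (fun p => G.Adj p.1 p.2), (f p.1 - f p.2) = 0 := by
  have hswap : ∑ p ∈ (A ×ˢ A).filter (fun p => G.Adj p.1 p.2), f p.2
      = ∑ p ∈ (A ×ˢ A).filter (fun p => G.Adj p.1 p.2), f p.1 := by
    refine Finset.sum_nbij' Prod.swap Prod.swap ?_ ?_ ?_ ?_ ?_
    · intro p hp
      simp only [Finset.mem_filter, Finset.mem_product] at hp ⊢
      exact ⟨⟨hp.1.2, hp.1.1⟩, hp.2.symm⟩
    · intro p hp
      simp only [Finset.mem_filter, Finset.mem_product] at hp ⊢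
      exact ⟨⟨hp.1.2, hp.1.1⟩, hp.2.symm⟩
    · intro p _; rfl
    · intro p _; rfl
    · intro p _; rfl
  rw [Finset.sum_sub_distrib, hswap, sub_self]

/-- The key intertwining identity. -/
lemma intertwine (G : SimpleGraph V) [DecidableRel G.Adj] {k : ℕ} (f : V → ℝ)
    (A : {s : Finset V // s.card = k}) :
    (Lap (tokenGraph G k) *ᵥ (fun B : {s : Finset V // s.card = k} => ∑ a ∈ B.1, f a)) A
      = ∑ a ∈ A.1, (Lap G *ᵥ f) a := by
  classical
  rw [Lap_mulVec]
  -- rewrite the RHS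
  have hR : ∀ a ∈ A.1, (Lap G *ᵥ f) a
      = (∑ b ∈ A.1ᶜ.filter (G.Adj a), (f a - f b))
        + ∑ b ∈ A.1.filter (G.Adj a), (f a - f b) := by
    intro a _
    rw [Lap_mulVec]
    rw [← Finset.sum_filter_add_sum_filter_not (G.neighborFinset a) (· ∈ A.1) (fun b => f a - f b)]
    rw [add_comm]
    congr 1
    · congr 1
      ext b
      simp [SimpleGraph.mem_neighborFinset, and_comm]
    · congr 1
      ext b
      simp [SimpleGraph.mem_neighborFinset, and_comm]
  rw [Finset.sum_congr rfl hR, Finset.sum_add_distrib]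
  have hprod : ∀ (s : Finset V), ∑ a ∈ A.1, ∑ b ∈ s.filter (G.Adj a), (f a - f b)
      = ∑ p ∈ (A.1 ×ˢ s).filter (fun p => G.Adj p.1 p.2), (f p.1 - f p.2) := by
    intro s
    rw [Finset.sum_filter, Finset.sum_product]
    congr 1
    ext a
    rw [Finset.sum_filter]
  rw [hprod, hprod, antisym_sum_zero, add_zero]
  -- now the bijection between neighbors of A and admissible pairs
  refine (Finset.sum_bij
    (fun (p : V × V) (hp : p ∈ (A.1 ×ˢ A.1ᶜ).filter (fun p => G.Adj p.1 p.2)) =>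
      (⟨insert p.2 (A.1.erase p.1), by
        simp only [Finset.mem_filter, Finset.mem_product, Finset.mem_compl] at hp
        rw [card_swapset hp.1.1 hp.1.2]; exact A.2⟩ : {s : Finset V // s.card = k}))
    ?_ ?_ ?_ ?_).symm
  · -- maps into neighbors
    intro p hp
    simp only [Finset.mem_filter, Finset.mem_product, Finset.mem_compl] at hp
    rw [SimpleGraph.mem_neighborFinset]
    exact ⟨p.1, p.2, hp.1.1, Finset.mem_insert_self _ _, hp.2,
      symmDiff_swapset hp.1.1 hp.1.2⟩
  · -- injective
    intro p hp q hq heq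
    simp only [Finset.mem_filter, Finset.mem_product, Finset.mem_compl] at hp hq
    have := swapset_inj hp.1.1 hp.1.2 hq.1.1 hq.1.2 (congrArg Subtype.val heq)
    exact Prod.ext this.1 this.2
  · -- surjective
    intro B hB
    rw [SimpleGraph.mem_neighborFinset] at hB
    obtain ⟨a, b, ha, hb, hab, hBeq⟩ := tokenAdj_structure hB
    refine ⟨(a, b), ?_, ?_⟩
    · simp only [Finset.mem_filter, Finset.mem_product, Finset.mem_compl]
      exact ⟨⟨ha, hb⟩, hab⟩
    · exact Subtype.ext hBeq.symm
  · -- values agree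
    intro p hp
    simp only [Finset.mem_filter, Finset.mem_product, Finset.mem_compl] at hp
    have hbe : p.2 ∉ A.1.erase p.1 := fun h => hp.1.2 (Finset.mem_of_mem_erase h)
    rw [Finset.sum_insert hbe, Finset.sum_erase_eq_sub hp.1.1]
    ring

end Aux

/-- The summation map `T f A = ∑_{a ∈ A} f a` as a linear map. -/
noncomputable def Tmap (n k : ℕ) :
    (Fin n → ℝ) →ₗ[ℝ] ({s : Finset (Fin n) // s.card = k} → ℝ) where
  toFun f := fun A => ∑ a ∈ A.1, f a
  map_add' f g := by funext A; simp [Finset.sum_add_distrib]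
  map_smul' c f := by funext A; simp [Finset.mul_sum]

lemma Tmap_inj (n k : ℕ) (hk1 : 1 ≤ k) (hkn : k + 1 ≤ n) :
    Function.Injective (Tmap n k) := by
  have hker : ∀ f : Fin n → ℝ, Tmap n k f = 0 → f = 0 := by
    intro f hf
    have hzero : ∀ A : Finset (Fin n), A.card = k → ∑ a ∈ A, f a = 0 := by
      intro A hA
      exact congrFun hf ⟨A, hA⟩
    have hconst : ∀ u v : Fin n, f u = f v := by
      intro u v
      by_cases huv : u = v
      · rw [huv]
      · have hcard : k - 1 ≤ (Finset.univ \ {u, v} : Finset (Fin n)).card := by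
          rw [Finset.card_sdiff_of_subset (Finset.subset_univ _), Finset.card_univ, Fintype.card_fin,
            Finset.card_insert_of_notMem (by simpa using huv), Finset.card_singleton]
          omega
        obtain ⟨S, hS, hScard⟩ := Finset.exists_subset_card_eq hcard
        have huS : u ∉ S := fun h => by simpa using (hS h)
        have hvS : v ∉ S := fun h => by simpa using (hS h)
        have h1 : f u + ∑ a ∈ S, f a = 0 := by
          rw [← Finset.sum_insert huS]
          exact hzero _ (by rw [Finset.card_insert_of_notMem huS, hScard]; omega)
        have h2 : f v + ∑ a ∈ S, f a = 0 := by
          rw [← Finset.sum_insert hvS]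
          exact hzero _ (by rw [Finset.card_insert_of_notMem hvS, hScard]; omega)
        linarith
    funext u
    obtain ⟨A, _, hAcard⟩ := Finset.exists_subset_card_eq
      (by rw [Finset.card_univ, Fintype.card_fin]; omega : k ≤ (Finset.univ : Finset (Fin n)).card)
    have : ∑ a ∈ A, f a = ∑ _a ∈ A, f u := Finset.sum_congr rfl (fun a _ => hconst a u)
    rw [hzero A hAcard, Finset.sum_const, hAcard, nsmul_eq_mul] at this
    have hk : (k : ℝ) ≠ 0 := Nat.cast_ne_zero.mpr (by omega)
    rcases mul_eq_zero.mp this.symm with h | h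
    · exact absurd h hk
    · exact h
  intro f g hfg
  have : Tmap n k (f - g) = 0 := by rw [map_sub, hfg, sub_self]
  have h0 := hker _ this
  exact sub_eq_zero.mp h0

/-- For a graph `G` on `n` vertices and `1 ≤ k ≤ n - 1`, the Laplacian
spectrum of `G` is contained in that of the `k`-token graph `F_k(G)`: for every real `λ`,
the multiplicity of `λ` as a Laplacian eigenvalue of `F_k(G)` is at least its multiplicity
as a Laplacian eigenvalue of `G`. -/
theorem laplacian_spectrum_subset_token (n k : ℕ) (hk1 : 1 ≤ k) (hk2 : k ≤ n - 1)
    (G : SimpleGraph (Fin n)) (lam : ℝ) :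
    Module.finrank ℝ (Module.End.eigenspace (Matrix.toLin' (Lap G)) lam) ≤
      Module.finrank ℝ (Module.End.eigenspace (Matrix.toLin' (Lap (tokenGraph G k))) lam) := by
  classical
  have hkn : k + 1 ≤ n := by omega
  set T := Tmap n k with hT
  have hcomm : ∀ f : Fin n → ℝ,
      Matrix.toLin' (Lap (tokenGraph G k)) (T f) = T (Matrix.toLin' (Lap G) f) := by
    intro f
    funext A
    rw [Matrix.toLin'_apply, Matrix.toLin'_apply]
    exact intertwine G f A
  have hmap : ∀ x ∈ Module.End.eigenspace (Matrix.toLin' (Lap G)) lam,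
      T x ∈ Module.End.eigenspace (Matrix.toLin' (Lap (tokenGraph G k))) lam := by
    intro x hx
    rw [Module.End.mem_eigenspace_iff] at hx ⊢
    rw [hcomm, hx, LinearMap.map_smul]
  have hinj : Function.Injective
      (T.restrict hmap) := by
    intro x y hxy
    have := congrArg Subtype.val hxy
    exact Subtype.ext (Tmap_inj n k hk1 hkn this)
  exact LinearMap.finrank_le_finrank_of_injective hinj
end

section
/- Let G be a finite simple graph on vertex set [n] = {1,…,n}, let k be an integer with 1 ≤ k ≤ n−1, and let B be the (n;k)-binomial matrix. If v ∈ ℝⁿ is an eigenvector of the Laplacian matrix L(G) with eigenvalue λ, then the vector Bv is nonzero and is an eigenvector of the Laplacian matrix of the k-token graph F_k(G) with the same eigenvalue λ. -/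
open Finset Matrix
open scoped symmDiff

/-- The `(n;k)`-binomial matrix: rows indexed by the `k`-subsets of `Fin n`,
columns by elements of `Fin n`; entry is `1` iff the element lies in the subset. -/
def binMatrix (n k : ℕ) : Matrix {s : Finset (Fin n) // s.card = k} (Fin n) ℝ :=
  Matrix.of fun A j => if j ∈ A.1 then 1 else 0

lemma Lap_eq_s1 {V : Type*} [Fintype V] [DecidableEq V] (H : SimpleGraph V)
    [DecidableRel H.Adj] : Lap H = H.lapMatrix ℝ := by
  unfold Lap
  congr!

lemma lap_apply {V : Type*} [Fintype V] [DecidableEq V] (H : SimpleGraph V)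
    [DecidableRel H.Adj] (w : V → ℝ) (i : V) :
    (Lap H *ᵥ w) i = ∑ j ∈ H.neighborFinset i, (w i - w j) := by
  rw [Lap_eq_s1, SimpleGraph.lapMatrix_mulVec_apply, Finset.sum_sub_distrib, Finset.sum_const,
    SimpleGraph.degree, nsmul_eq_mul]

section swap
variable {V : Type*} [DecidableEq V]

lemma symmDiff_swap {A : Finset V} {a b : V} (ha : a ∈ A) (hb : b ∉ A) (hne : a ≠ b) :
    A ∆ (insert b (A.erase a)) = {a, b} := by
  ext x
  simp only [Finset.mem_symmDiff, Finset.mem_insert, Finset.mem_erase, Finset.mem_singleton]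
  constructor
  · rintro (⟨hxA, hx⟩ | ⟨(rfl | ⟨hxa, hxA⟩), hx⟩)
    · push_neg at hx
      left
      by_contra hxa
      exact (hx.2 hxa) hxA
    · exact Or.inr rfl
    · exact absurd hxA hx
  · rintro (rfl | rfl)
    · exact Or.inl ⟨ha, by push_neg; exact ⟨fun h => absurd ha (h ▸ hb), fun h => absurd rfl h⟩⟩
    · exact Or.inr ⟨Or.inl rfl, hb⟩

lemma eq_swap {A B : Finset V} {a b : V} (ha : a ∈ A) (hb : b ∈ B) (hne : a ≠ b)
    (hd : A ∆ B = {a, b}) : a ∉ B ∧ b ∉ A ∧ B = insert b (A.erase a) := by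
  have hmem : ∀ x, (x ∈ A ∧ x ∉ B) ∨ (x ∈ B ∧ x ∉ A) ↔ (x = a ∨ x = b) := by
    intro x
    rw [← Finset.mem_symmDiff, hd]
    simp
  have haB : a ∉ B := by
    rcases ((hmem a).mpr (Or.inl rfl)) with ⟨_, h⟩ | ⟨_, h⟩
    · exact h
    · exact absurd ha h
  have hbA : b ∉ A := by
    rcases ((hmem b).mpr (Or.inr rfl)) with ⟨_, h⟩ | ⟨_, h⟩
    · exact absurd hb h
    · exact h
  refine ⟨haB, hbA, ?_⟩
  ext x
  simp only [Finset.mem_insert, Finset.mem_erase]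
  constructor
  · intro hxB
    by_cases hxA : x ∈ A
    · exact Or.inr ⟨fun h => haB (h ▸ hxB), hxA⟩
    · rcases (hmem x).mp (Or.inr ⟨hxB, hxA⟩) with rfl | rfl
      · exact absurd hxB haB
      · exact Or.inl rfl
  · rintro (rfl | ⟨hxa, hxA⟩)
    · exact hb
    · by_contra hxB
      rcases (hmem x).mp (Or.inl ⟨hxA, hxB⟩) with rfl | rfl
      · exact hxa rfl
      · exact hbA hxA

lemma card_swap {A : Finset V} {a b : V} (ha : a ∈ A) (hb : b ∉ A) {k : ℕ} (hA : A.card = k)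
    (hk : 1 ≤ k) : (insert b (A.erase a)).card = k := by
  rw [Finset.card_insert_of_notMem (fun h => hb (Finset.mem_of_mem_erase h)),
    Finset.card_erase_of_mem ha, hA]
  omega

end swap

/-- If `v` is an eigenvector of the Laplacian of `G` with eigenvalue `λ`,
then `B v` is nonzero and is an eigenvector of the Laplacian of `F_k(G)` with eigenvalue `λ`,
where `B` is the `(n;k)`-binomial matrix. -/
theorem binMatrix_mulVec_eigenvector (n k : ℕ) (hk1 : 1 ≤ k) (hk2 : k ≤ n - 1)
    (G : SimpleGraph (Fin n)) (lam : ℝ) (v : Fin n → ℝ) (hv : v ≠ 0)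
    (hev : Lap G *ᵥ v = lam • v) :
    binMatrix n k *ᵥ v ≠ 0 ∧
      Lap (tokenGraph G k) *ᵥ (binMatrix n k *ᵥ v) = lam • (binMatrix n k *ᵥ v) := by
  classical
  have hn : 2 ≤ n := by omega
  have hw : ∀ A : {s : Finset (Fin n) // s.card = k},
      (binMatrix n k *ᵥ v) A = ∑ j ∈ A.1, v j := by
    intro A
    simp [binMatrix, Matrix.mulVec, dotProduct, ite_mul, Finset.sum_ite_mem]
  constructor
  · -- nonzero
    intro h0
    have hz : ∀ A : {s : Finset (Fin n) // s.card = k}, ∑ j ∈ A.1, v j = 0 := by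
      intro A
      rw [← hw A, h0]
      rfl
    -- v is constant
    have hconst : ∀ i j : Fin n, i ≠ j → v i = v j := by
      intro i j hij
      obtain ⟨t, hts, htc⟩ : ∃ t ⊆ (Finset.univ \ {i, j} : Finset (Fin n)), t.card = k - 1 := by
        apply Finset.exists_subset_card_eq
        rw [Finset.card_sdiff_of_subset (Finset.subset_univ _), Finset.card_univ, Fintype.card_fin,
          Finset.card_pair hij]
        omega
      have hit : i ∉ t := fun h => by simpa using (hts h)
      have hjt : j ∉ t := fun h => by simpa using (hts h)
      have hci : (insert i t).card = k := by
        rw [Finset.card_insert_of_notMem hit, htc]; omega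
      have hcj : (insert j t).card = k := by
        rw [Finset.card_insert_of_notMem hjt, htc]; omega
      have h1 := hz ⟨insert i t, hci⟩
      have h2 := hz ⟨insert j t, hcj⟩
      rw [Finset.sum_insert hit] at h1
      rw [Finset.sum_insert hjt] at h2
      linarith
    have hc : ∀ i : Fin n, v i = v ⟨0, by omega⟩ := by
      intro i
      by_cases hi : i = ⟨0, by omega⟩
      · rw [hi]
      · exact hconst i _ hi
    obtain ⟨t, hts, htc⟩ : ∃ t ⊆ (Finset.univ \ {(⟨0, by omega⟩ : Fin n)} : Finset (Fin n)),
        t.card = k - 1 := by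
      apply Finset.exists_subset_card_eq
      rw [Finset.card_sdiff_of_subset (Finset.subset_univ _), Finset.card_univ, Fintype.card_fin,
        Finset.card_singleton]
      omega
    have h0t : (⟨0, by omega⟩ : Fin n) ∉ t := fun h => by simpa using (hts h)
    have hc0 : (insert (⟨0, by omega⟩ : Fin n) t).card = k := by
      rw [Finset.card_insert_of_notMem h0t, htc]; omega
    have h1 := hz ⟨insert (⟨0, by omega⟩ : Fin n) t, hc0⟩
    have hsum : ∑ j ∈ insert (⟨0, by omega⟩ : Fin n) t, v j
        = ((insert (⟨0, by omega⟩ : Fin n) t).card : ℝ) * v ⟨0, by omega⟩ := by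
      rw [Finset.sum_congr rfl (fun j _ => hc j), Finset.sum_const, nsmul_eq_mul]
    rw [hsum, hc0] at h1
    have hkne : (k : ℝ) ≠ 0 := by positivity
    have hv0 : v ⟨0, by omega⟩ = 0 := by
      rcases mul_eq_zero.mp h1 with h | h
      · exact absurd h hkne
      · exact h
    apply hv
    funext i
    rw [hc i, hv0]
    rfl
  · -- eigenvector equation
    ext A
    rw [lap_apply, Pi.smul_apply, smul_eq_mul]
    conv_rhs => rw [hw]
    have hev' : ∀ a, (Lap G *ᵥ v) a = lam * v a := fun a => by rw [hev]; rfl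
    have hzero : ∑ a ∈ A.1, ∑ b ∈ A.1, (if G.Adj a b then v a - v b else 0) = 0 := by
      have hS : (∑ a ∈ A.1, ∑ b ∈ A.1, (if G.Adj a b then v a - v b else 0))
          = -∑ a ∈ A.1, ∑ b ∈ A.1, (if G.Adj a b then v a - v b else 0) := by
        nth_rewrite 1 [Finset.sum_comm]
        rw [← Finset.sum_neg_distrib]
        apply Finset.sum_congr rfl
        intro a _
        rw [← Finset.sum_neg_distrib]
        apply Finset.sum_congr rfl
        intro b _
        by_cases h : G.Adj a b
        · rw [if_pos (h.symm), if_pos h]; ring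
        · rw [if_neg (fun hh => h hh.symm), if_neg h, neg_zero]
      linarith
    have hsplit : ∀ a, (Lap G *ᵥ v) a
        = (∑ b ∈ A.1, if G.Adj a b then v a - v b else 0)
          + ∑ b ∈ A.1ᶜ, (if G.Adj a b then v a - v b else 0) := by
      intro a
      rw [lap_apply, SimpleGraph.neighborFinset_eq_filter, Finset.sum_filter,
        Finset.sum_add_sum_compl]
    calc ∑ B ∈ (tokenGraph G k).neighborFinset A,
          ((binMatrix n k *ᵥ v) A - (binMatrix n k *ᵥ v) B)
        = ∑ p ∈ (A.1 ×ˢ A.1ᶜ).filter (fun p => G.Adj p.1 p.2), (v p.1 - v p.2) := by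
          refine (Finset.sum_bij
            (fun p hp => (⟨insert p.2 (A.1.erase p.1),
              card_swap
                (Finset.mem_product.mp (Finset.mem_filter.mp hp).1).1
                (Finset.mem_compl.mp (Finset.mem_product.mp (Finset.mem_filter.mp hp).1).2)
                A.2 hk1⟩ : {s : Finset (Fin n) // s.card = k}))
            ?_ ?_ ?_ ?_).symm
          · -- membership
            rintro ⟨a, b⟩ hp
            obtain ⟨hmem, hadj⟩ := Finset.mem_filter.mp hp
            obtain ⟨ha, hb⟩ := Finset.mem_product.mp hmem
            rw [SimpleGraph.mem_neighborFinset]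
            exact ⟨a, b, ha, Finset.mem_insert_self _ _, hadj,
              symmDiff_swap ha (Finset.mem_compl.mp hb) (G.ne_of_adj hadj)⟩
          · -- injectivity
            rintro ⟨a, b⟩ hp ⟨a', b'⟩ hp' heq
            obtain ⟨hmem, hadj⟩ := Finset.mem_filter.mp hp
            obtain ⟨ha, hb⟩ := Finset.mem_product.mp hmem
            obtain ⟨hmem', hadj'⟩ := Finset.mem_filter.mp hp'
            obtain ⟨ha', hb'⟩ := Finset.mem_product.mp hmem'
            replace hb := Finset.mem_compl.mp hb
            replace hb' := Finset.mem_compl.mp hb'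
            have hEq : insert b ((A.1).erase a) = insert b' ((A.1).erase a') :=
              congrArg Subtype.val heq
            have haa : a = a' := by
              by_contra hne
              have h1 : a' ∈ insert b ((A.1).erase a) :=
                Finset.mem_insert.mpr (Or.inr (Finset.mem_erase.mpr
                  ⟨fun h => hne h.symm, ha'⟩))
              rw [hEq] at h1
              rcases Finset.mem_insert.mp h1 with h | h
              · exact hb' (h ▸ ha')
              · exact (Finset.mem_erase.mp h).1 rfl
            have hbb : b = b' := by
              have h1 : b ∈ insert b ((A.1).erase a) := Finset.mem_insert_self _ _
              rw [hEq] at h1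
              rcases Finset.mem_insert.mp h1 with h | h
              · exact h
              · exact absurd (Finset.mem_of_mem_erase h) hb
            exact Prod.ext haa hbb
          · -- surjectivity
            intro B hB
            rw [SimpleGraph.mem_neighborFinset] at hB
            obtain ⟨a, b, ha, hb, hadj, hd⟩ := hB
            obtain ⟨haB, hbA, hBe⟩ := eq_swap ha hb (G.ne_of_adj hadj) hd
            exact ⟨(a, b), Finset.mem_filter.mpr
              ⟨Finset.mem_product.mpr ⟨ha, Finset.mem_compl.mpr hbA⟩, hadj⟩,
              Subtype.ext hBe.symm⟩
          · -- values
            rintro ⟨a, b⟩ hp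
            obtain ⟨hmem, hadj⟩ := Finset.mem_filter.mp hp
            obtain ⟨ha, hb⟩ := Finset.mem_product.mp hmem
            replace hb := Finset.mem_compl.mp hb
            rw [hw, hw]
            have hbe : b ∉ (A.1).erase a := fun h => hb (Finset.mem_of_mem_erase h)
            rw [Finset.sum_insert hbe]
            have h2 := Finset.sum_erase_add (A.1) v ha
            linarith
      _ = ∑ a ∈ A.1, ∑ b ∈ A.1ᶜ, (if G.Adj a b then v a - v b else 0) := by
          rw [Finset.sum_filter, Finset.sum_product]
      _ = ∑ a ∈ A.1, (Lap G *ᵥ v) a := by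
          have hh : ∑ a ∈ A.1, (Lap G *ᵥ v) a
              = (∑ a ∈ A.1, ∑ b ∈ A.1, (if G.Adj a b then v a - v b else 0))
                + ∑ a ∈ A.1, ∑ b ∈ A.1ᶜ, (if G.Adj a b then v a - v b else 0) := by
            rw [← Finset.sum_add_distrib]
            exact Finset.sum_congr rfl fun a _ => hsplit a
          rw [hh, hzero, zero_add]
      _ = lam * ∑ a ∈ A.1, v a := by
          rw [Finset.mul_sum]
          exact Finset.sum_congr rfl fun a _ => hev' a
end

section
/- Let G be a finite simple graph on vertex set [n] = {1,…,n} and let k be an integer with 1 ≤ k ≤ n−1. Let L₁ be the Laplacian matrix of G, let L_k be the Laplacian matrix of the k-token graph F_k(G), and let B be the (n;k)-binomial matrix. Then Bᵀ L_k B = C(n−2, k−1) · L₁. -/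
open Finset Matrix
open scoped symmDiff

section Aux

variable {V : Type*} [Fintype V] [DecidableEq V]

omit [Fintype V] in
lemma aux_sdiff_ins {S : Finset V} {a b : V} (ha : a ∉ S) (hb : b ∉ S) (hab : a ≠ b) :
    (insert a S) \ (insert b S) = {a} := by
  ext x
  simp only [Finset.mem_sdiff, Finset.mem_insert, Finset.mem_singleton]
  constructor
  · rintro ⟨h1 | h1, h2⟩
    · exact h1
    · exact absurd (Or.inr h1) h2
  · rintro rfl
    exact ⟨Or.inl rfl, by push_neg; exact ⟨hab, ha⟩⟩

omit [Fintype V] in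
lemma aux_symmDiff_ins {S : Finset V} {a b : V} (ha : a ∉ S) (hb : b ∉ S) (hab : a ≠ b) :
    (insert a S) ∆ (insert b S) = {a, b} := by
  rw [symmDiff_def, aux_sdiff_ins ha hb hab, aux_sdiff_ins hb ha hab.symm,
    Finset.sup_eq_union, ← Finset.insert_eq]

omit [Fintype V] in
lemma aux_token_struct {A B : Finset V} {a b : V}
    (ha : a ∈ A) (hb : b ∈ B) (hab : a ≠ b) (hd : A ∆ B = {a, b}) :
    a ∉ B ∧ b ∉ A ∧ a ∉ A ∩ B ∧ b ∉ A ∩ B ∧ A = insert a (A ∩ B) ∧ B = insert b (A ∩ B) := by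
  have hm : ∀ x, (x ∈ A ∧ x ∉ B ∨ x ∈ B ∧ x ∉ A) ↔ (x = a ∨ x = b) := by
    intro x; rw [← Finset.mem_symmDiff, hd]; simp
  have haB : a ∉ B := by
    intro h
    rcases (hm a).mpr (Or.inl rfl) with ⟨_, h2⟩ | ⟨_, h2⟩
    exacts [h2 h, h2 ha]
  have hbA : b ∉ A := by
    intro h
    rcases (hm b).mpr (Or.inr rfl) with ⟨_, h2⟩ | ⟨_, h2⟩
    exacts [h2 hb, h2 h]
  refine ⟨haB, hbA, by simp [haB], by simp [hbA], ?_, ?_⟩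
  · ext x
    simp only [Finset.mem_insert, Finset.mem_inter]
    constructor
    · intro hx
      by_cases hxB : x ∈ B
      · exact Or.inr ⟨hx, hxB⟩
      · rcases (hm x).mp (Or.inl ⟨hx, hxB⟩) with h | h
        · exact Or.inl h
        · exact absurd (h ▸ hx) hbA
    · rintro (rfl | ⟨h, _⟩)
      exacts [ha, h]
  · ext x
    simp only [Finset.mem_insert, Finset.mem_inter]
    constructor
    · intro hx
      by_cases hxA : x ∈ A
      · exact Or.inr ⟨hxA, hx⟩
      · rcases (hm x).mp (Or.inr ⟨hx, hxA⟩) with h | h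
        · exact absurd (h ▸ hx) haB
        · exact Or.inl h
    · rintro (rfl | ⟨_, h⟩)
      exacts [hb, h]

omit [DecidableEq V] in
lemma deg_eq_sum (G : SimpleGraph V) [DecidableRel G.Adj]
    (a : V) : (G.degree a : ℝ) = ∑ b, if G.Adj a b then (1:ℝ) else 0 := by
  rw [Finset.sum_boole, SimpleGraph.degree, SimpleGraph.neighborFinset_eq_filter]

lemma lap_entry (G : SimpleGraph V) [DecidableRel G.Adj]
    (i j : V) : G.lapMatrix ℝ i j =
      (if i = j then (G.degree i : ℝ) else 0) - (if G.Adj i j then 1 else 0) := by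
  simp [SimpleGraph.lapMatrix, SimpleGraph.degMatrix, Matrix.diagonal]

lemma lap_bilin (G : SimpleGraph V) [DecidableRel G.Adj] (u v : V → ℝ) :
    ∑ a, ∑ b, u a * G.lapMatrix ℝ a b * v b
      = (∑ a, ∑ b, if G.Adj a b then (u a - u b) * (v a - v b) else 0) / 2 := by
  have hd : ∀ (w : V → ℝ), (∑ a, ∑ b, if G.Adj a b then w a else 0)
      = ∑ a, (G.degree a : ℝ) * w a := by
    intro w
    refine Finset.sum_congr rfl fun a _ => ?_
    rw [deg_eq_sum, Finset.sum_mul]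
    exact Finset.sum_congr rfl fun b _ => by by_cases h : G.Adj a b <;> simp [h]
  have hswap : ∀ (F : V → V → ℝ), (∑ a, ∑ b, if G.Adj a b then F a b else 0)
      = ∑ a, ∑ b, if G.Adj a b then F b a else 0 := by
    intro F
    rw [Finset.sum_comm]
    refine Finset.sum_congr rfl fun a _ => Finset.sum_congr rfl fun b _ => ?_
    by_cases h : G.Adj a b
    · simp [h, h.symm]
    · have h2 : ¬ G.Adj b a := fun h' => h h'.symm
      simp [h, h2]
  have hLHS : ∑ a, ∑ b, u a * G.lapMatrix ℝ a b * v b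
      = (∑ a, (G.degree a : ℝ) * (u a * v a))
        - ∑ a, ∑ b, (if G.Adj a b then u a * v b else 0) := by
    rw [← Finset.sum_sub_distrib]
    refine Finset.sum_congr rfl fun a _ => ?_
    simp only [lap_entry, mul_sub, sub_mul, mul_ite, ite_mul, mul_zero, zero_mul, mul_one,
      Finset.sum_sub_distrib, Finset.sum_ite_eq, Finset.mem_univ, if_true]
    ring_nf
  have hexp : ∀ a b, (if G.Adj a b then (u a - u b) * (v a - v b) else 0)
      = ((if G.Adj a b then u a * v a else 0) - (if G.Adj a b then u a * v b else 0))
        - ((if G.Adj a b then u b * v a else 0) - (if G.Adj a b then u b * v b else 0)) := by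
    intro a b; by_cases h : G.Adj a b <;> simp [h]; ring
  have hRHS : (∑ a, ∑ b, if G.Adj a b then (u a - u b) * (v a - v b) else 0)
      = 2 * ((∑ a, (G.degree a : ℝ) * (u a * v a))
        - ∑ a, ∑ b, (if G.Adj a b then u a * v b else 0)) := by
    simp only [hexp, Finset.sum_sub_distrib]
    rw [hd fun a => u a * v a,
      hswap fun a b => u b * v b, hd fun a => u a * v a,
      hswap fun a b => u b * v a]
    ring
  rw [hLHS, hRHS]; ring

end Aux


lemma card_insert_of_powerset {n k : ℕ} (hk1 : 1 ≤ k) {a b c : Fin n} {S : Finset (Fin n)}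
    (hc : c = a ∨ c = b)
    (hS : S ∈ Finset.powersetCard (k-1) (({a,b} : Finset (Fin n))ᶜ)) :
    (insert c S).card = k := by
  obtain ⟨hsub, hcard⟩ := Finset.mem_powersetCard.mp hS
  have hc' : c ∉ S := fun h => by
    have h2 := hsub h
    simp only [Finset.mem_compl, Finset.mem_insert, Finset.mem_singleton] at h2
    push_neg at h2
    rcases hc with rfl | rfl
    · exact h2.1 rfl
    · exact h2.2 rfl
  rw [Finset.card_insert_of_notMem hc', hcard, Nat.sub_add_cancel hk1]

lemma token_sum {n k : ℕ} (G : SimpleGraph (Fin n)) (hk1 : 1 ≤ k) (i j : Fin n)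
    [DecidableRel G.Adj] [DecidableRel (tokenGraph G k).Adj] :
    (∑ A : {s : Finset (Fin n) // s.card = k}, ∑ B : {s : Finset (Fin n) // s.card = k},
      if (tokenGraph G k).Adj A B then
        ((if i ∈ A.1 then (1:ℝ) else 0) - (if i ∈ B.1 then 1 else 0)) *
        ((if j ∈ A.1 then (1:ℝ) else 0) - (if j ∈ B.1 then 1 else 0)) else 0)
    = ((n-2).choose (k-1) : ℝ) * ∑ a, ∑ b, if G.Adj a b then
        ((if i = a then (1:ℝ) else 0) - (if i = b then 1 else 0)) *
        ((if j = a then (1:ℝ) else 0) - (if j = b then 1 else 0)) else 0 := by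
  classical
  set h : Fin n → Fin n → ℝ := fun a b =>
    ((if i = a then (1:ℝ) else 0) - (if i = b then 1 else 0)) *
    ((if j = a then (1:ℝ) else 0) - (if j = b then 1 else 0)) with hh
  set g : {s : Finset (Fin n) // s.card = k} → {s : Finset (Fin n) // s.card = k} → ℝ :=
    fun A B =>
      ((if i ∈ A.1 then (1:ℝ) else 0) - (if i ∈ B.1 then 1 else 0)) *
      ((if j ∈ A.1 then (1:ℝ) else 0) - (if j ∈ B.1 then 1 else 0)) with hg
  have hval : ∀ (S : Finset (Fin n)) (a b : Fin n), a ∉ S → b ∉ S →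
      ∀ (x : Fin n), ((if x ∈ insert a S then (1:ℝ) else 0) - (if x ∈ insert b S then 1 else 0))
        = ((if x = a then (1:ℝ) else 0) - (if x = b then 1 else 0)) := by
    intro S a b ha hb x
    by_cases hx : x ∈ S
    · have h1 : x ≠ a := fun h => ha (h ▸ hx)
      have h2 : x ≠ b := fun h => hb (h ▸ hx)
      simp [Finset.mem_insert, hx, h1, h2]
    · simp [Finset.mem_insert, hx]
  have hcard2 : ∀ a b : Fin n, a ≠ b →
      (Finset.powersetCard (k-1) (({a,b} : Finset (Fin n))ᶜ)).card = (n-2).choose (k-1) := by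
    intro a b hab
    rw [Finset.card_powersetCard, Finset.card_compl, Finset.card_pair hab, Fintype.card_fin]
  -- LHS as a sum over the set of adjacent pairs
  have hL : (∑ A : {s : Finset (Fin n) // s.card = k}, ∑ B : {s : Finset (Fin n) // s.card = k},
        if (tokenGraph G k).Adj A B then g A B else 0)
      = ∑ p ∈ (Finset.univ ×ˢ Finset.univ).filter
          (fun p : {s : Finset (Fin n) // s.card = k} × {s : Finset (Fin n) // s.card = k} =>
            (tokenGraph G k).Adj p.1 p.2), g p.1 p.2 := by
    rw [← Finset.sum_product', Finset.sum_filter]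
  have hR : ((n-2).choose (k-1) : ℝ) * (∑ a, ∑ b, if G.Adj a b then h a b else 0)
      = ∑ x ∈ ((Finset.univ ×ˢ Finset.univ).filter
            (fun q : Fin n × Fin n => G.Adj q.1 q.2)).sigma
            (fun q => Finset.powersetCard (k-1) (({q.1, q.2} : Finset (Fin n))ᶜ)),
          h x.1.1 x.1.2 := by
    rw [Finset.sum_sigma]
    dsimp only
    rw [show (∑ a, ∑ b, if G.Adj a b then h a b else 0)
        = ∑ q ∈ (Finset.univ ×ˢ Finset.univ).filter
            (fun q : Fin n × Fin n => G.Adj q.1 q.2), h q.1 q.2 by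
      rw [← Finset.sum_product', Finset.sum_filter]]
    rw [Finset.mul_sum]
    refine Finset.sum_congr rfl fun q hq => ?_
    have hadj : G.Adj q.1 q.2 := (Finset.mem_filter.mp hq).2
    rw [Finset.sum_const, nsmul_eq_mul, hcard2 _ _ hadj.ne]
  rw [hL, hR]
  -- the bijection
  refine (Finset.sum_bij
    (i := fun (x : Σ _q : Fin n × Fin n, Finset (Fin n)) hx =>
      ((⟨insert x.1.1 x.2, card_insert_of_powerset hk1 (Or.inl rfl)
          (Finset.mem_sigma.mp hx).2⟩,
        ⟨insert x.1.2 x.2, card_insert_of_powerset hk1 (Or.inr rfl)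
          (Finset.mem_sigma.mp hx).2⟩) :
        {s : Finset (Fin n) // s.card = k} × {s : Finset (Fin n) // s.card = k}))
    ?_ ?_ ?_ ?_).symm
  · -- maps into the target set
    rintro ⟨⟨a, b⟩, S⟩ hx
    simp only [Finset.mem_sigma, Finset.mem_filter, Finset.mem_powersetCard] at hx
    obtain ⟨⟨-, hadj⟩, hsub, hScard⟩ := hx
    have ha : a ∉ S := fun h => by simpa using hsub h
    have hb : b ∉ S := fun h => by simpa using hsub h
    refine Finset.mem_filter.mpr ⟨by simp, ?_⟩
    exact ⟨a, b, Finset.mem_insert_self _ _, Finset.mem_insert_self _ _, hadj,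
      aux_symmDiff_ins ha hb hadj.ne⟩
  · -- injectivity
    rintro ⟨⟨a, b⟩, S⟩ hx ⟨⟨a', b'⟩, S'⟩ hx' heq
    simp only [Finset.mem_sigma, Finset.mem_filter, Finset.mem_powersetCard] at hx hx'
    obtain ⟨⟨-, hadj⟩, hsub, hScard⟩ := hx
    obtain ⟨⟨-, hadj'⟩, hsub', hScard'⟩ := hx'
    have ha : a ∉ S := fun h => by simpa using hsub h
    have hb : b ∉ S := fun h => by simpa using hsub h
    have ha' : a' ∉ S' := fun h => by simpa using hsub' h
    have hb' : b' ∉ S' := fun h => by simpa using hsub' h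
    simp only [Prod.mk.injEq, Subtype.mk.injEq] at heq
    obtain ⟨h1, h2⟩ := heq
    have haa : a = a' := by
      have e1 : (insert a S) \ (insert b S) = {a} := aux_sdiff_ins ha hb hadj.ne
      have e2 : (insert a' S') \ (insert b' S') = {a'} := aux_sdiff_ins ha' hb' hadj'.ne
      rw [h1, h2, e2] at e1
      exact (Finset.singleton_injective e1.symm)
    have hbb : b = b' := by
      have e1 : (insert b S) \ (insert a S) = {b} := aux_sdiff_ins hb ha hadj.ne.symm
      have e2 : (insert b' S') \ (insert a' S') = {b'} := aux_sdiff_ins hb' ha' hadj'.ne.symm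
      rw [h1, h2, e2] at e1
      exact (Finset.singleton_injective e1.symm)
    subst haa; subst hbb
    have hSS : S = S' := by
      have h3 := congrArg (fun t => Finset.erase t a) h1
      simpa [Finset.erase_insert ha, Finset.erase_insert ha'] using h3
    subst hSS; rfl
  · -- surjectivity
    rintro ⟨⟨A, hAc⟩, ⟨B, hBc⟩⟩ hp
    have hadjT : (tokenGraph G k).Adj ⟨A, hAc⟩ ⟨B, hBc⟩ := (Finset.mem_filter.mp hp).2
    obtain ⟨a, b, ha, hb, hadj, hd⟩ := hadjT
    obtain ⟨haB, hbA, haS, hbS, hA, hB⟩ := aux_token_struct ha hb hadj.ne hd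
    have hScard : (A ∩ B).card = k - 1 := by
      have h1 : (A ∩ B).card + 1 = k := by
        rw [← Finset.card_insert_of_notMem haS, ← hA, hAc]
      omega
    refine ⟨⟨(a, b), A ∩ B⟩, ?_, ?_⟩
    · refine Finset.mem_sigma.mpr ⟨Finset.mem_filter.mpr ⟨by simp, hadj⟩, ?_⟩
      refine Finset.mem_powersetCard.mpr ⟨?_, hScard⟩
      intro x hx
      simp only [Finset.mem_compl, Finset.mem_insert, Finset.mem_singleton]
      push_neg
      obtain ⟨hxA, hxB⟩ := Finset.mem_inter.mp hx
      exact ⟨fun h => haB (h ▸ hxB), fun h => hbA (h ▸ hxA)⟩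
    · simp only [Prod.mk.injEq, Subtype.mk.injEq]
      exact ⟨hA.symm, hB.symm⟩
  · -- values agree
    rintro ⟨⟨a, b⟩, S⟩ hx
    simp only [Finset.mem_sigma, Finset.mem_filter, Finset.mem_powersetCard] at hx
    obtain ⟨⟨-, hadj⟩, hsub, hScard⟩ := hx
    have ha : a ∉ S := fun h => by simpa using hsub h
    have hb : b ∉ S := fun h => by simpa using hsub h
    simp only [hg, hh]
    rw [hval S a b ha hb i, hval S a b ha hb j]

lemma triple_apply {ι ι' κ : Type*} [Fintype κ] (M : Matrix ι κ ℝ) (N : Matrix κ κ ℝ)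
    (P : Matrix κ ι' ℝ) (i : ι) (j : ι') :
    (M * N * P) i j = ∑ a, ∑ b, M i a * N a b * P b j := by
  simp only [Matrix.mul_apply, Finset.sum_mul]
  rw [Finset.sum_comm]

lemma delta_collapse {V : Type*} [Fintype V] [DecidableEq V] (L : Matrix V V ℝ) (i j : V) :
    ∑ a, ∑ b, (if i = a then (1:ℝ) else 0) * L a b * (if j = b then 1 else 0) = L i j := by
  simp [ite_mul, mul_ite, Finset.sum_ite_eq]

/-- `Bᵀ L_k B = C(n-2, k-1) L₁`, where `L₁` is the Laplacian of `G`,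
`L_k` is the Laplacian of `F_k(G)`, and `B` is the `(n;k)`-binomial matrix. -/
theorem binMatrix_conj_lap_token (n k : ℕ) (hk1 : 1 ≤ k) (hk2 : k ≤ n - 1)
    (G : SimpleGraph (Fin n)) :
    (binMatrix n k)ᵀ * Lap (tokenGraph G k) * binMatrix n k =
      ((n - 2).choose (k - 1) : ℝ) • Lap G := by
  letI instT : DecidableRel (tokenGraph G k).Adj := Classical.decRel _
  letI instG : DecidableRel G.Adj := Classical.decRel _
  have hT : Lap (tokenGraph G k) = (tokenGraph G k).lapMatrix ℝ := rfl
  have hG : Lap G = G.lapMatrix ℝ := rfl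
  ext i j
  have tri : ((binMatrix n k)ᵀ * Lap (tokenGraph G k) * binMatrix n k) i j
      = ∑ A, ∑ B, (if i ∈ A.1 then (1:ℝ) else 0) * (tokenGraph G k).lapMatrix ℝ A B *
          (if j ∈ B.1 then 1 else 0) := by
    rw [hT, triple_apply]
    rfl
  rw [tri, lap_bilin (tokenGraph G k) (fun A => if i ∈ A.1 then (1:ℝ) else 0)
    (fun B => if j ∈ B.1 then (1:ℝ) else 0)]
  rw [token_sum G hk1 i j]
  have hLG : G.lapMatrix ℝ i j
      = (∑ a, ∑ b, if G.Adj a b then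
          ((if i = a then (1:ℝ) else 0) - (if i = b then 1 else 0)) *
          ((if j = a then (1:ℝ) else 0) - (if j = b then 1 else 0)) else 0) / 2 := by
    rw [← delta_collapse (G.lapMatrix ℝ) i j,
      lap_bilin G (fun a => if i = a then (1:ℝ) else 0) (fun b => if j = b then (1:ℝ) else 0)]
  rw [Matrix.smul_apply, hG, hLG, smul_eq_mul]
  ring
end

section
/- Let G be a finite simple graph on vertex set [n] and let h, k be integers with 1 ≤ h ≤ k ≤ n/2. Let B be the (n;k,h)-binomial matrix, and let L_h and L_k be the Laplacian matrices of the token graphs F_h(G) and F_k(G). If v is an eigenvector of L_h with eigenvalue λ, then Bv is nonzero and is an eigenvector of L_k with eigenvalue λ; moreover, if v₁,…,v_m are linearly independent eigenvectors of L_h, then Bv₁,…,Bv_m are linearly independent. -/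
open Finset Matrix
open scoped symmDiff
open scoped Classical

/-- The `(n;k₂,k₁)`-binomial matrix: rows indexed by the `k₂`-subsets, columns by the
`k₁`-subsets of `Fin n`; entry is `1` iff the column subset is contained in the row subset. -/
def binMatrix2 (n k₂ k₁ : ℕ) :
    Matrix {s : Finset (Fin n) // s.card = k₂} {s : Finset (Fin n) // s.card = k₁} ℝ :=
  Matrix.of fun A X => if X.1 ⊆ A.1 then 1 else 0

variable {n : ℕ}

lemma mem_swapImage {a b x : Fin n} {X : Finset (Fin n)} :
    x ∈ X.image (Equiv.swap a b) ↔ Equiv.swap a b x ∈ X := by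
  constructor
  · rintro hx
    obtain ⟨y, hy, rfl⟩ := Finset.mem_image.mp hx
    simpa [Equiv.swap_apply_self] using hy
  · intro hx
    exact Finset.mem_image.mpr ⟨_, hx, Equiv.swap_apply_self _ _ _⟩

variable {n : ℕ}

lemma tokenAdj_iff {j : ℕ} (G : SimpleGraph (Fin n)) (A B : {s : Finset (Fin n) // s.card = j}) :
    (tokenGraph G j).Adj A B ↔
      ∃ a b, a ∈ A.1 ∧ b ∉ A.1 ∧ G.Adj a b ∧ B.1 = A.1.image (Equiv.swap a b) := by
  constructor
  · rintro ⟨a, b, ha, hb, hab, hd⟩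
    have hne : a ≠ b := hab.ne
    have haS : a ∈ A.1 ∆ B.1 := by rw [hd]; simp
    have hbS : b ∈ A.1 ∆ B.1 := by rw [hd]; simp
    have haB : a ∉ B.1 := by
      rcases Finset.mem_symmDiff.mp haS with h | h
      · exact h.2
      · exact absurd ha h.2
    have hbA : b ∉ A.1 := by
      rcases Finset.mem_symmDiff.mp hbS with h | h
      · exact absurd hb h.2
      · exact h.2
    refine ⟨a, b, ha, hbA, hab, ?_⟩
    ext x
    rw [mem_swapImage]
    rcases eq_or_ne x a with rfl | hxa
    · rw [Equiv.swap_apply_left]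
      exact iff_of_false haB hbA
    rcases eq_or_ne x b with rfl | hxb
    · rw [Equiv.swap_apply_right]
      exact iff_of_true hb ha
    · rw [Equiv.swap_apply_of_ne_of_ne hxa hxb]
      have hxS : x ∉ A.1 ∆ B.1 := by
        rw [hd, Finset.mem_insert, Finset.mem_singleton]
        push_neg; exact ⟨hxa, hxb⟩
      rw [Finset.mem_symmDiff] at hxS
      push_neg at hxS
      exact ⟨hxS.2, hxS.1⟩
  · rintro ⟨a, b, ha, hb, hab, hB⟩
    have hne : a ≠ b := hab.ne
    have hmB : ∀ x, x ∈ B.1 ↔ Equiv.swap a b x ∈ A.1 := fun x => by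
      rw [hB]; exact mem_swapImage
    have hbB : b ∈ B.1 := by rw [hmB, Equiv.swap_apply_right]; exact ha
    refine ⟨a, b, ha, hbB, hab, ?_⟩
    ext x
    rw [Finset.mem_symmDiff, Finset.mem_insert, Finset.mem_singleton, hmB]
    rcases eq_or_ne x a with rfl | hxa
    · rw [Equiv.swap_apply_left]; tauto
    rcases eq_or_ne x b with rfl | hxb
    · rw [Equiv.swap_apply_right]; tauto
    · rw [Equiv.swap_apply_of_ne_of_ne hxa hxb]; tauto


lemma swapImage_swapImage (a b : Fin n) (X : Finset (Fin n)) :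
    (X.image (Equiv.swap a b)).image (Equiv.swap a b) = X := by
  ext x; simp [mem_swapImage, Equiv.swap_apply_self]

lemma swapImage_subset_iff {a b : Fin n} {X Y : Finset (Fin n)} :
    X.image (Equiv.swap a b) ⊆ Y.image (Equiv.swap a b) ↔ X ⊆ Y :=
  Finset.image_subset_image_iff (Equiv.injective _)

lemma card_swapImage (a b : Fin n) (X : Finset (Fin n)) :
    (X.image (Equiv.swap a b)).card = X.card :=
  Finset.card_image_of_injective _ (Equiv.injective _)

lemma swapImage_of_not_mem {a b : Fin n} {X : Finset (Fin n)} (ha : a ∉ X) (hb : b ∉ X) :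
    X.image (Equiv.swap a b) = X := by
  ext x
  rw [mem_swapImage]
  rcases eq_or_ne x a with rfl | hxa
  · rw [Equiv.swap_apply_left]; exact iff_of_false hb ha
  rcases eq_or_ne x b with rfl | hxb
  · rw [Equiv.swap_apply_right]; exact iff_of_false ha hb
  · rw [Equiv.swap_apply_of_ne_of_ne hxa hxb]

/-- the "token move" map on `j`-subsets induced by swapping `a` and `b`. -/
def mv {j : ℕ} (a b : Fin n) (X : {s : Finset (Fin n) // s.card = j}) :
    {s : Finset (Fin n) // s.card = j} :=
  ⟨X.1.image (Equiv.swap a b), by rw [card_swapImage]; exact X.2⟩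

lemma mv_mv {j : ℕ} (a b : Fin n) (X : {s : Finset (Fin n) // s.card = j}) :
    mv a b (mv a b X) = X := Subtype.ext (swapImage_swapImage a b X.1)

/-- the set of "movable pairs" out of a vertex set `X`. -/
noncomputable def PP (G : SimpleGraph (Fin n)) (X : Finset (Fin n)) : Finset (Fin n × Fin n) :=
  Finset.univ.filter fun p => p.1 ∈ X ∧ p.2 ∉ X ∧ G.Adj p.1 p.2

lemma mem_PP {G : SimpleGraph (Fin n)} {X : Finset (Fin n)} {p : Fin n × Fin n} :
    p ∈ PP G X ↔ p.1 ∈ X ∧ p.2 ∉ X ∧ G.Adj p.1 p.2 := by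
  simp [PP]

lemma sum_adj_eq_sum_PP {j : ℕ} (G : SimpleGraph (Fin n))
    [DecidableRel (tokenGraph G j).Adj]
    (A : {s : Finset (Fin n) // s.card = j}) (f : {s : Finset (Fin n) // s.card = j} → ℝ) :
    (∑ B, if (tokenGraph G j).Adj A B then f B else 0)
      = ∑ p ∈ PP G A.1, f (mv p.1 p.2 A) := by
  rw [← Finset.sum_filter]
  refine (Finset.sum_bij (fun p _ => mv p.1 p.2 A) ?_ ?_ ?_ ?_).symm
  · rintro ⟨a, b⟩ hp
    obtain ⟨ha, hb, hab⟩ := mem_PP.mp hp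
    rw [Finset.mem_filter]
    exact ⟨Finset.mem_univ _, (tokenAdj_iff G A _).mpr ⟨a, b, ha, hb, hab, rfl⟩⟩
  · rintro ⟨a, b⟩ hp ⟨a', b'⟩ hp' heq
    obtain ⟨ha, hb, hab⟩ := mem_PP.mp hp
    obtain ⟨ha', hb', hab'⟩ := mem_PP.mp hp'
    have himg : A.1.image (Equiv.swap a b) = A.1.image (Equiv.swap a' b') :=
      congrArg Subtype.val heq
    have hbb : b = b' := by
      have hb1 : b ∈ A.1.image (Equiv.swap a b) := by
        rw [mem_swapImage, Equiv.swap_apply_right]; exact ha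
      rw [himg, mem_swapImage] at hb1
      rcases eq_or_ne b a' with rfl | h1
      · exact absurd ha' hb
      rcases eq_or_ne b b' with rfl | h2
      · rfl
      · rw [Equiv.swap_apply_of_ne_of_ne h1 h2] at hb1
        exact absurd hb1 hb
    subst hbb
    have haa : a = a' := by
      by_contra hne
      have h3 : a ∈ A.1.image (Equiv.swap a' b) := by
        rw [mem_swapImage, Equiv.swap_apply_of_ne_of_ne (Ne.symm (Ne.symm hne)) hab.ne]
        exact ha
      rw [← himg, mem_swapImage, Equiv.swap_apply_left] at h3
      exact hb h3
    subst haa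
    rfl
  · intro B hB
    rw [Finset.mem_filter] at hB
    obtain ⟨a, b, ha, hb, hab, hBimg⟩ := (tokenAdj_iff G A B).mp hB.2
    exact ⟨(a, b), mem_PP.mpr ⟨ha, hb, hab⟩, Subtype.ext hBimg.symm⟩
  · intro B hB
    rfl

lemma lap_mulVec {j : ℕ} (G : SimpleGraph (Fin n))
    (w : {s : Finset (Fin n) // s.card = j} → ℝ) (A : {s : Finset (Fin n) // s.card = j}) :
    (Lap (tokenGraph G j) *ᵥ w) A = ∑ p ∈ PP G A.1, (w A - w (mv p.1 p.2 A)) := by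
  letI := Classical.decRel (tokenGraph G j).Adj
  show ((tokenGraph G j).lapMatrix ℝ *ᵥ w) A = _
  rw [SimpleGraph.lapMatrix_mulVec_apply, SimpleGraph.degree_eq_sum_if_adj,
    SimpleGraph.neighborFinset_eq_filter, Finset.sum_filter,
    sum_adj_eq_sum_PP G A (fun _ => (1:ℝ)), sum_adj_eq_sum_PP G A w,
    Finset.sum_sub_distrib, Finset.sum_mul]
  simp

lemma bin_mulVec (k h : ℕ) (v : {s : Finset (Fin n) // s.card = h} → ℝ)
    (A : {s : Finset (Fin n) // s.card = k}) :
    (binMatrix2 n k h *ᵥ v) A = ∑ X, if X.1 ⊆ A.1 then v X else 0 := by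
  simp [binMatrix2, mulVec, dotProduct, ite_mul]

lemma mv_subset {a b : Fin n} {j : ℕ} {X : {s : Finset (Fin n) // s.card = j}}
    {A : Finset (Fin n)} (hX : X.1 ⊆ A) (ha : a ∈ A) (hb : b ∈ A) :
    (mv a b X).1 ⊆ A := by
  intro x hx
  rw [mv] at hx
  simp only at hx
  rw [mem_swapImage] at hx
  rcases eq_or_ne x a with rfl | hxa
  · exact ha
  rcases eq_or_ne x b with rfl | hxb
  · exact hb
  · rw [Equiv.swap_apply_of_ne_of_ne hxa hxb] at hx
    exact hX hx

lemma mv_comm {j : ℕ} (a b : Fin n) (X : {s : Finset (Fin n) // s.card = j}) :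
    mv b a X = mv a b X := by
  apply Subtype.ext
  show X.1.image (Equiv.swap b a) = X.1.image (Equiv.swap a b)
  rw [Equiv.swap_comm]

lemma mem_mv {j : ℕ} {a b x : Fin n} {X : {s : Finset (Fin n) // s.card = j}} :
    x ∈ (mv a b X).1 ↔ Equiv.swap a b x ∈ X.1 := mem_swapImage

lemma lap_comm (G : SimpleGraph (Fin n)) (h k : ℕ)
    (v : {s : Finset (Fin n) // s.card = h} → ℝ) :
    Lap (tokenGraph G k) *ᵥ (binMatrix2 n k h *ᵥ v)
      = binMatrix2 n k h *ᵥ (Lap (tokenGraph G h) *ᵥ v) := by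
  classical
  funext A
  rw [lap_mulVec G _ A, bin_mulVec k h (Lap (tokenGraph G h) *ᵥ v) A]
  -- rewrite each summand of the LHS
  have key : ∀ a b : Fin n, a ∈ A.1 → b ∉ A.1 →
      (binMatrix2 n k h *ᵥ v) A - (binMatrix2 n k h *ᵥ v) (mv a b A)
      = ∑ X : {s : Finset (Fin n) // s.card = h},
          if a ∈ X.1 ∧ X.1 ⊆ A.1 then v X - v (mv a b X) else 0 := by
    intro a b ha hb
    rw [bin_mulVec, bin_mulVec]
    have reidx : (∑ X, if X.1 ⊆ (mv a b A).1 then v X else 0)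
        = ∑ X, if X.1 ⊆ A.1 then v (mv a b X) else 0 := by
      refine (Fintype.sum_equiv ⟨mv a b, mv a b, mv_mv a b, mv_mv a b⟩ _ _ ?_).symm
      intro X
      simp only [Equiv.coe_fn_mk, mv, swapImage_subset_iff]
    rw [reidx, ← Finset.sum_sub_distrib]
    apply Finset.sum_congr rfl
    intro X _
    by_cases hXA : X.1 ⊆ A.1
    · by_cases haX : a ∈ X.1
      · rw [if_pos hXA, if_pos hXA, if_pos ⟨haX, hXA⟩]
      · have hbX : b ∉ X.1 := fun hbX => hb (hXA hbX)
        have : mv a b X = X := Subtype.ext (swapImage_of_not_mem haX hbX)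
        rw [if_pos hXA, if_pos hXA, if_neg (by tauto), this, sub_self]
    · rw [if_neg hXA, if_neg hXA, if_neg (by tauto), sub_self]
  -- abbreviations for the two kinds of summands
  set F1 : (Fin n × Fin n) → {s : Finset (Fin n) // s.card = h} → ℝ := fun p X =>
    if p.1 ∈ X.1 ∧ X.1 ⊆ A.1 ∧ p.2 ∉ A.1 ∧ G.Adj p.1 p.2 then v X - v (mv p.1 p.2 X) else 0
    with hF1
  set F2 : (Fin n × Fin n) → {s : Finset (Fin n) // s.card = h} → ℝ := fun p X =>
    if p.1 ∈ X.1 ∧ X.1 ⊆ A.1 ∧ p.2 ∈ A.1 ∧ p.2 ∉ X.1 ∧ G.Adj p.1 p.2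
    then v X - v (mv p.1 p.2 X) else 0 with hF2
  have stepA : ∑ p ∈ PP G A.1,
      ((binMatrix2 n k h *ᵥ v) A - (binMatrix2 n k h *ᵥ v) (mv p.1 p.2 A))
      = ∑ X, ∑ p : Fin n × Fin n, F1 p X := by
    rw [Finset.sum_comm]
    rw [PP, Finset.sum_filter]
    apply Finset.sum_congr rfl
    intro p _
    by_cases hc : p.1 ∈ A.1 ∧ p.2 ∉ A.1 ∧ G.Adj p.1 p.2
    · rw [if_pos hc, key p.1 p.2 hc.1 hc.2.1]
      apply Finset.sum_congr rfl
      intro X _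
      rw [hF1]
      simp only
      congr 1
      rw [eq_iff_iff]
      constructor
      · rintro ⟨h1, h2⟩
        exact ⟨h1, h2, hc.2.1, hc.2.2⟩
      · rintro ⟨h1, h2, _, _⟩
        exact ⟨h1, h2⟩
    · rw [if_neg hc]
      symm
      apply Finset.sum_eq_zero
      intro X _
      rw [hF1]
      simp only
      rw [if_neg]
      rintro ⟨h1, h2, h3, h4⟩
      exact hc ⟨h2 h1, h3, h4⟩
  have stepB : (∑ X, if X.1 ⊆ A.1 then (Lap (tokenGraph G h) *ᵥ v) X else 0)
      = (∑ X, ∑ p : Fin n × Fin n, F1 p X) + ∑ X, ∑ p : Fin n × Fin n, F2 p X := by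
    rw [← Finset.sum_add_distrib]
    apply Finset.sum_congr rfl
    intro X _
    rw [← Finset.sum_add_distrib]
    by_cases hXA : X.1 ⊆ A.1
    · rw [if_pos hXA, lap_mulVec, PP, Finset.sum_filter]
      apply Finset.sum_congr rfl
      intro q _
      rw [hF1, hF2]
      simp only
      by_cases h3 : q.2 ∈ X.1
      · have h2 : q.2 ∈ A.1 := hXA h3
        by_cases h1 : q.1 ∈ X.1 <;> by_cases h4 : G.Adj q.1 q.2 <;>
          simp [h1, h2, h3, h4, hXA]
      · by_cases h1 : q.1 ∈ X.1 <;> by_cases h4 : G.Adj q.1 q.2 <;>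
          by_cases h2 : q.2 ∈ A.1 <;> simp [h1, h2, h3, h4, hXA]
    · rw [if_neg hXA]
      symm
      apply Finset.sum_eq_zero
      intro q _
      rw [hF1, hF2]
      simp only
      rw [if_neg (by tauto), if_neg (by tauto), add_zero]
  have stepC : ∑ X, ∑ p : Fin n × Fin n, F2 p X = 0 := by
    rw [show (∑ X, ∑ p : Fin n × Fin n, F2 p X)
        = ∑ i : {s : Finset (Fin n) // s.card = h} × (Fin n × Fin n), F2 i.2 i.1 from
      (Fintype.sum_prod_type (f := fun i => F2 i.2 i.1)).symm]
    set C : {s : Finset (Fin n) // s.card = h} × (Fin n × Fin n) → Prop := fun i =>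
      i.2.1 ∈ i.1.1 ∧ i.1.1 ⊆ A.1 ∧ i.2.2 ∈ A.1 ∧ i.2.2 ∉ i.1.1 ∧ G.Adj i.2.1 i.2.2 with hC
    have hCg : ∀ X (a b : Fin n), C (X, (a, b)) → C (mv a b X, (b, a)) := by
      rintro X a b ⟨h1, h2, h3, h4, h5⟩
      refine ⟨?_, ?_, h2 h1, ?_, h5.symm⟩
      · rw [mem_mv, Equiv.swap_apply_right]; exact h1
      · exact mv_subset h2 (h2 h1) h3
      · rw [mem_mv, Equiv.swap_apply_left]; exact h4
    have hval : ∀ (X : {s : Finset (Fin n) // s.card = h}) (a b : Fin n),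
        mv b a (mv a b X) = X := by
      intro X a b
      rw [mv_comm]
      exact mv_mv a b X
    apply Finset.sum_ninvolution
      (g := fun i => if C i then (mv i.2.1 i.2.2 i.1, (i.2.2, i.2.1)) else i)
    · rintro ⟨X, a, b⟩
      by_cases hc : C (X, (a, b))
      · rw [if_pos hc, hF2]
        simp only
        rw [if_pos ?pc1, if_pos ?pc2]
        case pc1 => exact ⟨hc.1, hc.2.1, hc.2.2.1, hc.2.2.2.1, hc.2.2.2.2⟩
        case pc2 =>
          have := hCg X a b hc
          exact ⟨this.1, this.2.1, this.2.2.1, this.2.2.2.1, this.2.2.2.2⟩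
        rw [hval X a b]
        ring
      · rw [if_neg hc, hF2]
        simp only
        rw [if_neg (fun hh => hc ⟨hh.1, hh.2.1, hh.2.2.1, hh.2.2.2.1, hh.2.2.2.2⟩)]
        simp
    · rintro ⟨X, a, b⟩ hne
      by_cases hc : C (X, (a, b))
      · rw [if_pos hc]
        intro heq
        have hba : b = a := by
          have := congrArg (fun z => z.2.1) heq
          exact this
        exact hc.2.2.2.2.ne hba.symm
      · rw [hF2] at hne
        simp only at hne
        rw [if_neg (fun hh => hc ⟨hh.1, hh.2.1, hh.2.2.1, hh.2.2.2.1, hh.2.2.2.2⟩)] at hne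
        exact absurd rfl hne
    · intro i; exact Finset.mem_univ _
    · rintro ⟨X, a, b⟩
      by_cases hc : C (X, (a, b))
      · rw [if_pos hc, if_pos (hCg X a b hc)]
        simp only
        rw [hval X a b]
      · rw [if_neg hc, if_neg hc]
  rw [stepA, stepB, stepC, add_zero]



lemma card_midUp (m : ℕ) (X U : Finset (Fin n)) (hXU : X ⊆ U) (hU : U.card = m + 1) :
    (Finset.univ.filter fun A' : {s : Finset (Fin n) // s.card = m} =>
      X ⊆ A'.1 ∧ A'.1 ⊆ U).card = (U \ X).card := by
  symm
  apply Finset.card_bij (fun c hc => (⟨U.erase c,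
    by rw [Finset.card_erase_of_mem (Finset.mem_sdiff.mp hc).1, hU, Nat.add_sub_cancel]⟩ :
      {s : Finset (Fin n) // s.card = m}))
  · intro c hc
    obtain ⟨hcU, hcX⟩ := Finset.mem_sdiff.mp hc
    rw [Finset.mem_filter]
    refine ⟨Finset.mem_univ _, ?_, Finset.erase_subset _ _⟩
    intro x hx
    exact Finset.mem_erase.mpr ⟨fun hxc => hcX (hxc ▸ hx), hXU hx⟩
  · intro c hc c' hc' heq
    have h1 : U.erase c = U.erase c' := congrArg Subtype.val heq
    by_contra hne
    have hmem : c' ∈ U.erase c := Finset.mem_erase.mpr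
      ⟨fun hh => hne (hh.symm), (Finset.mem_sdiff.mp hc').1⟩
    rw [h1] at hmem
    exact (Finset.mem_erase.mp hmem).1 rfl
  · intro A' hA'
    rw [Finset.mem_filter] at hA'
    obtain ⟨-, hXA', hA'U⟩ := hA'
    have hcard : (U \ A'.1).card = 1 := by
      rw [Finset.card_sdiff_of_subset hA'U, hU, A'.2, Nat.add_sub_cancel_left]
    obtain ⟨c, hc⟩ := Finset.card_eq_one.mp hcard
    have hcU : c ∈ U \ A'.1 := hc ▸ Finset.mem_singleton_self c
    obtain ⟨hcU1, hcA'⟩ := Finset.mem_sdiff.mp hcU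
    refine ⟨c, Finset.mem_sdiff.mpr ⟨hcU1, fun hcX => hcA' (hXA' hcX)⟩, ?_⟩
    apply Subtype.ext
    show U.erase c = A'.1
    symm
    apply Finset.eq_of_subset_of_card_le
    · intro x hx
      exact Finset.mem_erase.mpr ⟨fun hxc => hcA' (hxc ▸ hx), hA'U hx⟩
    · rw [Finset.card_erase_of_mem hcU1, hU, A'.2, Nat.add_sub_cancel]

lemma card_covers (m : ℕ) (X : Finset (Fin n)) (hX : X.card = m) :
    (Finset.univ.filter fun A : {s : Finset (Fin n) // s.card = m+1} =>
      X ⊆ A.1).card = n - m := by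
  have h2 : (Finset.univ \ X).card = n - m := by
    rw [Finset.card_sdiff_of_subset (Finset.subset_univ X), hX, Finset.card_univ, Fintype.card_fin]
  rw [← h2]
  symm
  apply Finset.card_bij (fun c hc => (⟨insert c X,
    by rw [Finset.card_insert_of_notMem (Finset.mem_sdiff.mp hc).2, hX]⟩ :
      {s : Finset (Fin n) // s.card = m+1}))
  · intro c hc
    rw [Finset.mem_filter]
    exact ⟨Finset.mem_univ _, Finset.subset_insert _ _⟩
  · intro c hc c' hc' heq
    have h1 : insert c X = insert c' X := congrArg Subtype.val heq
    have : c ∈ insert c' X := h1 ▸ Finset.mem_insert_self c X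
    rcases Finset.mem_insert.mp this with h | h
    · exact h
    · exact absurd h (Finset.mem_sdiff.mp hc).2
  · intro A hA
    rw [Finset.mem_filter] at hA
    obtain ⟨-, hXA⟩ := hA
    have hcard : (A.1 \ X).card = 1 := by
      rw [Finset.card_sdiff_of_subset hXA, hX, A.2, Nat.add_sub_cancel_left]
    obtain ⟨c, hc⟩ := Finset.card_eq_one.mp hcard
    have hcA : c ∈ A.1 \ X := hc ▸ Finset.mem_singleton_self c
    obtain ⟨hcA1, hcX⟩ := Finset.mem_sdiff.mp hcA
    refine ⟨c, Finset.mem_sdiff.mpr ⟨Finset.mem_univ _, hcX⟩, ?_⟩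
    apply Subtype.ext
    show insert c X = A.1
    apply Finset.eq_of_subset_of_card_le
    · exact Finset.insert_subset hcA1 hXA
    · rw [Finset.card_insert_of_notMem hcX, hX, A.2]

lemma card_eqcase (m : ℕ) (W : Finset (Fin n)) (hW : W.card = m) :
    (Finset.univ.filter fun A : {s : Finset (Fin n) // s.card = m} =>
      W ⊆ A.1).card = 1 := by
  rw [Finset.card_eq_one]
  refine ⟨⟨W, hW⟩, ?_⟩
  ext A
  rw [Finset.mem_filter, Finset.mem_singleton]
  constructor
  · rintro ⟨-, hWA⟩
    apply Subtype.ext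
    exact (Finset.eq_of_subset_of_card_le hWA (by rw [hW, A.2])).symm
  · rintro rfl
    exact ⟨Finset.mem_univ _, Finset.Subset.refl _⟩

lemma card_zerocase (m : ℕ) (W : Finset (Fin n)) (hW : m < W.card) :
    (Finset.univ.filter fun A : {s : Finset (Fin n) // s.card = m} =>
      W ⊆ A.1).card = 0 := by
  rw [Finset.card_eq_zero]
  ext A
  simp only [Finset.mem_filter, Finset.notMem_empty, iff_false, not_and, Finset.mem_univ,
    forall_true_left]
  intro hWA
  have := Finset.card_le_card hWA
  rw [A.2] at this
  exact absurd this (Nat.not_le.mpr hW)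

lemma card_subcase (m : ℕ) (W : Finset (Fin n)) (hW : W.card = m) :
    (Finset.univ.filter fun Z : {s : Finset (Fin n) // s.card = m} =>
      Z.1 ⊆ W).card = 1 := by
  rw [Finset.card_eq_one]
  refine ⟨⟨W, hW⟩, ?_⟩
  ext Z
  rw [Finset.mem_filter, Finset.mem_singleton]
  constructor
  · rintro ⟨-, hZW⟩
    exact Subtype.ext (Finset.eq_of_subset_of_card_le hZW (by rw [hW, Z.2]))
  · rintro rfl
    exact ⟨Finset.mem_univ _, Finset.Subset.refl _⟩

lemma binStep (h j : ℕ) :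
    binMatrix2 n (j+1) j * binMatrix2 n j h
      = ((j + 1 - h : ℕ) : ℝ) • binMatrix2 n (j+1) h := by
  ext A X
  rw [Matrix.mul_apply, Matrix.smul_apply]
  have key : ∀ A' : {s : Finset (Fin n) // s.card = j},
      binMatrix2 n (j+1) j A A' * binMatrix2 n j h A' X
        = if X.1 ⊆ A'.1 ∧ A'.1 ⊆ A.1 then (1:ℝ) else 0 := by
    intro A'
    rw [binMatrix2, binMatrix2]
    simp only [Matrix.of_apply]
    by_cases h1 : A'.1 ⊆ A.1 <;> by_cases h2 : X.1 ⊆ A'.1 <;> simp [h1, h2]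
  rw [Finset.sum_congr rfl fun A' _ => key A', Finset.sum_boole, binMatrix2]
  by_cases hXA : X.1 ⊆ A.1
  · simp only [Matrix.of_apply, if_pos hXA, smul_eq_mul, mul_one]
    rw [card_midUp j X.1 A.1 hXA A.2, Finset.card_sdiff_of_subset hXA, A.2, X.2]
  · simp only [Matrix.of_apply, if_neg hXA, smul_eq_mul, mul_zero]
    norm_num
    intro A' _ h1 h2
    exact hXA (h1.trans h2)

lemma bin_sl2 (j : ℕ) (hj1 : 1 ≤ j) (hjn : j ≤ n) :
    (binMatrix2 n (j+1) j)ᵀ * binMatrix2 n (j+1) j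
      = binMatrix2 n j (j-1) * (binMatrix2 n j (j-1))ᵀ + ((n : ℝ) - 2*j) • 1 := by
  ext X Y
  rw [Matrix.mul_apply, Matrix.add_apply, Matrix.mul_apply, Matrix.smul_apply]
  have key1 : ∀ A : {s : Finset (Fin n) // s.card = j+1},
      (binMatrix2 n (j+1) j)ᵀ X A * binMatrix2 n (j+1) j A Y
        = if X.1 ∪ Y.1 ⊆ A.1 then (1:ℝ) else 0 := by
    intro A
    rw [Matrix.transpose_apply, binMatrix2]
    simp only [Matrix.of_apply, Finset.union_subset_iff]
    by_cases h1 : X.1 ⊆ A.1 <;> by_cases h2 : Y.1 ⊆ A.1 <;> simp [h1, h2]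
  have key2 : ∀ Z : {s : Finset (Fin n) // s.card = j-1},
      binMatrix2 n j (j-1) X Z * (binMatrix2 n j (j-1))ᵀ Z Y
        = if Z.1 ⊆ X.1 ∩ Y.1 then (1:ℝ) else 0 := by
    intro Z
    rw [Matrix.transpose_apply, binMatrix2]
    simp only [Matrix.of_apply, Finset.subset_inter_iff]
    by_cases h1 : Z.1 ⊆ X.1 <;> by_cases h2 : Z.1 ⊆ Y.1 <;> simp [h1, h2]
  rw [Finset.sum_congr rfl fun A _ => key1 A, Finset.sum_congr rfl fun Z _ => key2 Z,
    Finset.sum_boole, Finset.sum_boole]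
  by_cases hXY : X = Y
  · subst hXY
    simp only [Finset.union_self, Finset.inter_self]
    rw [card_covers j X.1 X.2]
    have hcount2 : (Finset.univ.filter fun Z : {s : Finset (Fin n) // s.card = j-1} =>
        Z.1 ⊆ X.1).card = j := by
      have hmid := card_midUp (j-1) ∅ X.1 (Finset.empty_subset _)
        (by rw [X.2]; omega)
      rw [Finset.sdiff_empty, X.2] at hmid
      calc (Finset.univ.filter fun Z : {s : Finset (Fin n) // s.card = j-1} =>
            Z.1 ⊆ X.1).card
          = (Finset.univ.filter fun Z : {s : Finset (Fin n) // s.card = j-1} =>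
            ∅ ⊆ Z.1 ∧ Z.1 ⊆ X.1).card := by
            congr 1
            apply Finset.filter_congr
            intro Z _
            simp
        _ = j := hmid
    rw [hcount2, Matrix.one_apply_eq]
    have : ((n - j : ℕ) : ℝ) = (n : ℝ) - j := by
      rw [Nat.cast_sub hjn]
    rw [this]
    simp only [smul_eq_mul, mul_one]
    ring
  · rw [Matrix.one_apply_ne hXY, smul_zero, add_zero]
    have hne : X.1 ≠ Y.1 := fun hh => hXY (Subtype.ext hh)
    have hinter : (X.1 ∩ Y.1).card < j := by
      have hsub : X.1 ∩ Y.1 ⊆ X.1 := Finset.inter_subset_left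
      rcases lt_or_eq_of_le (Finset.card_le_card hsub) with hlt | heqc
      · rw [X.2] at hlt; exact hlt
      · exfalso
        have h1 : X.1 ∩ Y.1 = X.1 := Finset.eq_of_subset_of_card_le hsub (le_of_eq heqc.symm)
        have h2 : X.1 ⊆ Y.1 := by rw [← h1]; exact Finset.inter_subset_right
        exact hne (Finset.eq_of_subset_of_card_le h2 (by rw [X.2, Y.2]))
    have hcards : (X.1 ∪ Y.1).card + (X.1 ∩ Y.1).card = 2*j := by
      rw [Finset.card_union_add_card_inter, X.2, Y.2]; ring
    by_cases hcase : (X.1 ∩ Y.1).card = j - 1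
    · have hunion : (X.1 ∪ Y.1).card = j + 1 := by omega
      rw [card_eqcase (j+1) _ hunion, card_subcase (j-1) _ hcase]
    · have hlt2 : (j:ℕ) - 1 < (X.1 ∩ Y.1).card ∨ (X.1 ∩ Y.1).card < j - 1 := by omega
      have hinter' : (X.1 ∩ Y.1).card < j - 1 := by omega
      have hunion' : j + 1 < (X.1 ∪ Y.1).card := by omega
      rw [card_zerocase (j+1) _ hunion']
      have : (Finset.univ.filter fun Z : {s : Finset (Fin n) // s.card = j-1} =>
          Z.1 ⊆ X.1 ∩ Y.1).card = 0 := by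
        rw [Finset.card_eq_zero]
        ext Z
        simp only [Finset.mem_filter, Finset.notMem_empty, iff_false, not_and,
          Finset.mem_univ, forall_true_left]
        intro hZ
        have := Finset.card_le_card hZ
        rw [Z.2] at this
        omega
      rw [this]

lemma dot_self_transpose (m₁ m₂ : ℕ) (M : Matrix {s : Finset (Fin n) // s.card = m₁}
    {s : Finset (Fin n) // s.card = m₂} ℝ) (w : {s : Finset (Fin n) // s.card = m₁} → ℝ) :
    w ⬝ᵥ ((M * Mᵀ) *ᵥ w) = (Mᵀ *ᵥ w) ⬝ᵥ (Mᵀ *ᵥ w) := by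
  rw [← Matrix.mulVec_mulVec, Matrix.dotProduct_mulVec, Matrix.mulVec_transpose]

lemma step_inj (j : ℕ) (hj1 : 1 ≤ j) (hjn : 2*j < n)
    (w : {s : Finset (Fin n) // s.card = j} → ℝ)
    (hw : binMatrix2 n (j+1) j *ᵥ w = 0) : w = 0 := by
  have h0 : w ⬝ᵥ (((binMatrix2 n (j+1) j)ᵀ * binMatrix2 n (j+1) j) *ᵥ w) = 0 := by
    rw [← Matrix.mulVec_mulVec, hw, Matrix.mulVec_zero, dotProduct_zero]
  rw [bin_sl2 j hj1 (by omega), Matrix.add_mulVec, dotProduct_add,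
    dot_self_transpose, Matrix.smul_mulVec, Matrix.one_mulVec,
    dotProduct_smul] at h0
  have hq : 0 ≤ ((binMatrix2 n j (j-1))ᵀ *ᵥ w) ⬝ᵥ ((binMatrix2 n j (j-1))ᵀ *ᵥ w) :=
    Finset.sum_nonneg fun Z _ => mul_self_nonneg _
  have hc : (0:ℝ) < (n : ℝ) - 2*j := by
    have : (2*j : ℕ) < (n : ℕ) := hjn
    have := Nat.cast_lt (α := ℝ) |>.mpr this
    push_cast at this ⊢
    linarith
  have hww : w ⬝ᵥ w ≤ 0 := by
    by_contra hpos
    push_neg at hpos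
    have : 0 < ((n : ℝ) - 2*j) • (w ⬝ᵥ w) := by
      rw [smul_eq_mul]
      exact mul_pos hc hpos
    linarith
  have : w ⬝ᵥ w = 0 := le_antisymm hww (Finset.sum_nonneg fun Z _ => mul_self_nonneg _)
  exact dotProduct_self_eq_zero.mp this

lemma bin_inj (h k : ℕ) (hh : 1 ≤ h) (hhk : h ≤ k) (hkn : 2*k ≤ n)
    (v : {s : Finset (Fin n) // s.card = h} → ℝ)
    (hv : binMatrix2 n k h *ᵥ v = 0) : v = 0 := by
  induction k, hhk using Nat.le_induction with
  | base =>
    have hid : binMatrix2 n h h = 1 := by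
      ext A X
      rw [binMatrix2, Matrix.one_apply]
      simp only [Matrix.of_apply]
      congr 1
      rw [eq_iff_iff]
      constructor
      · intro hXA
        exact (Subtype.ext (Finset.eq_of_subset_of_card_le hXA (by rw [X.2, A.2]))).symm
      · rintro rfl
        exact Finset.Subset.refl _
    rw [hid, Matrix.one_mulVec] at hv
    exact hv
  | succ j hhj ih =>
    have hUv : binMatrix2 n (j+1) j *ᵥ (binMatrix2 n j h *ᵥ v) = 0 := by
      rw [Matrix.mulVec_mulVec, binStep h j, Matrix.smul_mulVec, hv, smul_zero]
    have hmid : binMatrix2 n j h *ᵥ v = 0 :=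
      step_inj j (le_trans hh hhj) (by omega) _ hUv
    exact ih (by omega) hmid

/-- For `1 ≤ h ≤ k ≤ n/2` and `B` the `(n;k,h)`-binomial matrix:
every eigenvector `v` of `L_h` with eigenvalue `λ` yields a nonzero eigenvector `B v` of
`L_k` with eigenvalue `λ`; moreover, linearly independent eigenvectors of `L_h` are mapped
to linearly independent vectors. -/
theorem binMatrix2_eigenvector_and_linearIndependent (n h k : ℕ)
    (hh : 1 ≤ h) (hhk : h ≤ k) (hkn : 2 * k ≤ n) (G : SimpleGraph (Fin n)) :
    (∀ (lam : ℝ) (v : {s : Finset (Fin n) // s.card = h} → ℝ), v ≠ 0 →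
        Lap (tokenGraph G h) *ᵥ v = lam • v →
        binMatrix2 n k h *ᵥ v ≠ 0 ∧
          Lap (tokenGraph G k) *ᵥ (binMatrix2 n k h *ᵥ v) =
            lam • (binMatrix2 n k h *ᵥ v)) ∧
      ∀ (m : ℕ) (v : Fin m → {s : Finset (Fin n) // s.card = h} → ℝ) (lam : Fin m → ℝ),
        (∀ i, v i ≠ 0) → (∀ i, Lap (tokenGraph G h) *ᵥ v i = lam i • v i) →
        LinearIndependent ℝ v →
        LinearIndependent ℝ fun i => binMatrix2 n k h *ᵥ v i := by
  classical
  have hinj : ∀ (w : {s : Finset (Fin n) // s.card = h} → ℝ),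
      binMatrix2 n k h *ᵥ w = 0 → w = 0 := fun w hw => bin_inj h k hh hhk hkn w hw
  constructor
  · intro lam v hv hev
    refine ⟨fun hBv => hv (hinj v hBv), ?_⟩
    rw [lap_comm G h k v, hev, Matrix.mulVec_smul]
  · intro m v lam hv0 hev hli
    have hker : LinearMap.ker (Matrix.mulVecLin (binMatrix2 n k h)) = ⊥ := by
      rw [LinearMap.ker_eq_bot']
      intro w hw
      exact hinj w hw
    have hmap := hli.map' (Matrix.mulVecLin (binMatrix2 n k h)) hker
    exact hmap
end

section
/- Let G be a finite simple graph on n vertices and let h, k be integers with 1 ≤ h ≤ k ≤ n/2. If λ is an eigenvalue of the Laplacian matrix of the h-token graph F_h(G), then λ is an eigenvalue of the Laplacian matrix of the k-token graph F_k(G). -/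
open Finset Matrix
open scoped symmDiff

section TokenAux

variable {n : ℕ}

/-- The type of `m`-subsets of `Fin n` (the vertices of the `m`-token graph). -/
abbrev Lv (n m : ℕ) := {s : Finset (Fin n) // s.card = m}

/-- Flip: replace `a` by `b` in a finite set. -/
def flF (S : Finset (Fin n)) (a b : Fin n) : Finset (Fin n) := insert b (S.erase a)

/-- The "up" operator on functions on finite sets. -/
def upF (v : Finset (Fin n) → ℝ) (S : Finset (Fin n)) : ℝ := ∑ c ∈ S, v (S.erase c)

/-- The "down" operator on functions on finite sets. -/
def downF (v : Finset (Fin n) → ℝ) (S : Finset (Fin n)) : ℝ := ∑ b ∈ Sᶜ, v (insert b S)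

/-- A Laplacian-like operator at the level of all finite subsets of `Fin n`. -/
noncomputable def lapF (G : SimpleGraph (Fin n)) (v : Finset (Fin n) → ℝ)
    (S : Finset (Fin n)) : ℝ :=
  letI := Classical.decRel G.Adj
  ∑ a ∈ S, ∑ b ∈ Sᶜ, if G.Adj a b then v S - v (flF S a b) else 0

/-- Extension by zero of a function on `m`-subsets to all finite subsets. -/
def extF (m : ℕ) (v : Lv n m → ℝ) (S : Finset (Fin n)) : ℝ :=
  if h : S.card = m then v ⟨S, h⟩ else 0

lemma extF_apply (m : ℕ) (v : Lv n m → ℝ) (A : Lv n m) : extF m v A.1 = v A := by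
  rw [extF, dif_pos A.2]

lemma extF_eq_zero (m : ℕ) (v : Lv n m → ℝ) {S : Finset (Fin n)} (h : S.card ≠ m) :
    extF m v S = 0 := dif_neg h

lemma card_flF {S : Finset (Fin n)} {a b : Fin n} (ha : a ∈ S) (hb : b ∉ S) :
    (flF S a b).card = S.card := by
  have hb' : b ∉ S.erase a := fun h => hb (Finset.mem_of_mem_erase h)
  rw [flF, Finset.card_insert_of_notMem hb', Finset.card_erase_of_mem ha]
  have := Finset.card_pos.2 ⟨a, ha⟩
  omega

lemma upF_extF_vanish (m : ℕ) (v : Lv n m → ℝ) {S : Finset (Fin n)}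
    (h : S.card ≠ m + 1) : upF (extF m v) S = 0 := by
  unfold upF
  refine Finset.sum_eq_zero fun c hc => ?_
  refine extF_eq_zero m v ?_
  rw [Finset.card_erase_of_mem hc]
  have := Finset.card_pos.2 ⟨c, hc⟩
  omega

lemma sum_erase_comm (S : Finset (Fin n)) (f : Fin n → Fin n → ℝ) :
    ∑ a ∈ S, ∑ c ∈ S.erase a, f a c = ∑ c ∈ S, ∑ a ∈ S.erase c, f a c := by
  have h1 : ∀ a ∈ S, ∑ c ∈ S.erase a, f a c = (∑ c ∈ S, f a c) - f a a := by
    intro a ha; rw [Finset.sum_erase_eq_sub ha]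
  have h2 : ∀ c ∈ S, ∑ a ∈ S.erase c, f a c = (∑ a ∈ S, f a c) - f c c := by
    intro c hc; rw [Finset.sum_erase_eq_sub hc]
  rw [Finset.sum_congr rfl h1, Finset.sum_congr rfl h2, Finset.sum_sub_distrib,
    Finset.sum_sub_distrib, Finset.sum_comm]

/-- Adjointness of the up and down operators. -/
lemma adjointF (w v : Finset (Fin n) → ℝ) :
    ∑ S : Finset (Fin n), downF w S * v S = ∑ S : Finset (Fin n), w S * upF v S := by
  unfold downF upF
  simp_rw [Finset.sum_mul, Finset.mul_sum]
  rw [Finset.sum_sigma', Finset.sum_sigma']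
  refine Finset.sum_bij' (fun p _ => ⟨insert p.2 p.1, p.2⟩)
    (fun p _ => ⟨p.1.erase p.2, p.2⟩) ?_ ?_ ?_ ?_ ?_
  · rintro ⟨S, b⟩ hp
    simp only [Finset.mem_sigma, Finset.mem_univ, true_and, Finset.mem_compl] at hp ⊢
    exact Finset.mem_insert_self _ _
  · rintro ⟨T, c⟩ hp
    simp only [Finset.mem_sigma, Finset.mem_univ, true_and, Finset.mem_compl] at hp ⊢
    exact Finset.notMem_erase _ _
  · rintro ⟨S, b⟩ hp
    simp only [Finset.mem_sigma, Finset.mem_univ, true_and, Finset.mem_compl] at hp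
    simp [Finset.erase_insert hp]
  · rintro ⟨T, c⟩ hp
    simp only [Finset.mem_sigma, Finset.mem_univ, true_and] at hp
    simp [Finset.insert_erase hp]
  · rintro ⟨S, b⟩ hp
    simp only [Finset.mem_sigma, Finset.mem_univ, true_and, Finset.mem_compl] at hp
    simp [Finset.erase_insert hp]

/-- The commutator identity `DU = UD + (|Sᶜ| - |S|) Id` at the Finset level. -/
lemma commF (v : Finset (Fin n) → ℝ) (S : Finset (Fin n)) :
    downF (upF v) S + (S.card : ℝ) * v S
      = upF (downF v) S + ((Sᶜ : Finset (Fin n)).card : ℝ) * v S := by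
  unfold downF upF
  have h1 : ∀ b ∈ Sᶜ, ∑ c ∈ insert b S, v ((insert b S).erase c)
      = v S + ∑ c ∈ S, v (insert b (S.erase c)) := by
    intro b hb
    rw [Finset.mem_compl] at hb
    rw [Finset.sum_insert hb, Finset.erase_insert hb]
    congr 1
    refine Finset.sum_congr rfl fun c hc => ?_
    rw [Finset.erase_insert_of_ne]
    exact fun h => hb (h ▸ hc)
  have h2 : ∀ c ∈ S, ∑ b ∈ (S.erase c)ᶜ, v (insert b (S.erase c))
      = v S + ∑ b ∈ Sᶜ, v (insert b (S.erase c)) := by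
    intro c hc
    rw [Finset.compl_erase, Finset.sum_insert (by simpa using hc),
      Finset.insert_erase hc]
  rw [Finset.sum_congr rfl h1, Finset.sum_congr rfl h2, Finset.sum_add_distrib,
    Finset.sum_add_distrib, Finset.sum_const, Finset.sum_const, Finset.sum_comm]
  push_cast
  ring

lemma upF_sub_flip (v : Finset (Fin n) → ℝ) {S : Finset (Fin n)} {a b : Fin n}
    (ha : a ∈ S) (hb : b ∉ S) :
    upF v S - upF v (flF S a b)
      = ∑ c ∈ S.erase a, (v (S.erase c) - v (flF (S.erase c) a b)) := by
  have hb' : b ∉ S.erase a := fun h => hb (Finset.mem_of_mem_erase h)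
  have e1 : upF v S = v (S.erase a) + ∑ c ∈ S.erase a, v (S.erase c) := by
    unfold upF
    rw [← Finset.add_sum_erase _ _ ha]
  have e2 : upF v (flF S a b)
      = v (S.erase a) + ∑ c ∈ S.erase a, v (flF (S.erase c) a b) := by
    unfold upF flF
    rw [Finset.sum_insert hb', Finset.erase_insert hb']
    congr 1
    refine Finset.sum_congr rfl fun c hc => ?_
    have hcb : c ≠ b := fun h => hb (h ▸ Finset.mem_of_mem_erase hc)
    rw [Finset.erase_insert_of_ne hcb.symm, Finset.erase_right_comm]
  rw [e1, e2, Finset.sum_sub_distrib]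
  ring

/-- The Laplacian-like operator commutes with the up operator. -/
lemma lap_commF (G : SimpleGraph (Fin n)) (v : Finset (Fin n) → ℝ) (S : Finset (Fin n)) :
    lapF G (upF v) S = upF (lapF G v) S := by
  letI := Classical.decRel G.Adj
  have hRHS : ∀ c ∈ S, lapF G v (S.erase c)
      = (∑ a ∈ S.erase c,
          if G.Adj a c then v (S.erase c) - v (S.erase a) else 0)
        + ∑ a ∈ S.erase c, ∑ b ∈ Sᶜ,
            if G.Adj a b then v (S.erase c) - v (flF (S.erase c) a b) else 0 := by
    intro c hc
    show (∑ a ∈ S.erase c, ∑ b ∈ (S.erase c)ᶜ,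
        if G.Adj a b then v (S.erase c) - v (flF (S.erase c) a b) else 0) = _
    rw [← Finset.sum_add_distrib]
    refine Finset.sum_congr rfl fun a ha => ?_
    rw [Finset.compl_erase, Finset.sum_insert (by simpa using hc)]
    congr 1
    have hac : a ≠ c := Finset.ne_of_mem_erase ha
    have : flF (S.erase c) a c = S.erase a := by
      unfold flF
      rw [Finset.erase_right_comm, Finset.insert_erase
        (Finset.mem_erase.2 ⟨hac.symm, hc⟩)]
    rw [this]
  have hLHS : lapF G (upF v) S
      = ∑ c ∈ S, ∑ a ∈ S.erase c, ∑ b ∈ Sᶜ,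
          if G.Adj a b then v (S.erase c) - v (flF (S.erase c) a b) else 0 := by
    have e1 : ∀ a ∈ S, ∀ b ∈ Sᶜ,
        (if G.Adj a b then upF v S - upF v (flF S a b) else 0)
        = ∑ c ∈ S.erase a, if G.Adj a b then v (S.erase c) - v (flF (S.erase c) a b) else 0 := by
      intro a ha b hb
      rw [Finset.mem_compl] at hb
      split
      · exact upF_sub_flip v ha hb
      · simp
    calc lapF G (upF v) S
        = ∑ a ∈ S, ∑ b ∈ Sᶜ, if G.Adj a b then upF v S - upF v (flF S a b) else 0 := rfl
      _ = ∑ a ∈ S, ∑ b ∈ Sᶜ, ∑ c ∈ S.erase a,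
            if G.Adj a b then v (S.erase c) - v (flF (S.erase c) a b) else 0 := by
          refine Finset.sum_congr rfl fun a ha => Finset.sum_congr rfl fun b hb => ?_
          exact e1 a ha b hb
      _ = ∑ a ∈ S, ∑ c ∈ S.erase a, ∑ b ∈ Sᶜ,
            if G.Adj a b then v (S.erase c) - v (flF (S.erase c) a b) else 0 := by
          refine Finset.sum_congr rfl fun a ha => ?_
          rw [Finset.sum_comm]
      _ = _ := by
          exact sum_erase_comm S _
  have hT : (∑ c ∈ S, ∑ a ∈ S.erase c,
      if G.Adj a c then v (S.erase c) - v (S.erase a) else 0) = 0 := by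
    have ext : ∀ c ∈ S, (∑ a ∈ S.erase c,
        if G.Adj a c then v (S.erase c) - v (S.erase a) else 0)
        = ∑ a ∈ S, if G.Adj a c then v (S.erase c) - v (S.erase a) else 0 := by
      intro c hc
      rw [Finset.sum_erase_eq_sub hc]
      simp
    rw [Finset.sum_congr rfl ext]
    have : (∑ c ∈ S, ∑ a ∈ S, if G.Adj a c then v (S.erase c) - v (S.erase a) else 0)
        = -∑ c ∈ S, ∑ a ∈ S, if G.Adj a c then v (S.erase c) - v (S.erase a) else 0 := by
      conv_lhs => rw [Finset.sum_comm]
      rw [← Finset.sum_neg_distrib]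
      refine Finset.sum_congr rfl fun c hc => ?_
      rw [← Finset.sum_neg_distrib]
      refine Finset.sum_congr rfl fun a ha => ?_
      by_cases h : G.Adj a c
      · rw [if_pos (G.adj_symm h), if_pos h]; ring
      · rw [if_neg (fun h' => h (G.adj_symm h')), if_neg h]; ring
    linarith
  have hUp : upF (lapF G v) S = ∑ c ∈ S, lapF G v (S.erase c) := rfl
  rw [hLHS, hUp, Finset.sum_congr rfl hRHS, Finset.sum_add_distrib, hT, zero_add]

/-- The action of the Laplacian of any graph, in `if`-form. -/
lemma lap_mulVec_s7 {W : Type*} [Fintype W] [DecidableEq W] (H : SimpleGraph W)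
    (v : W → ℝ) (x : W) :
    letI := Classical.decRel H.Adj
    (Lap H *ᵥ v) x = ∑ y : W, if H.Adj x y then v x - v y else 0 := by
  letI := Classical.decRel H.Adj
  show (H.lapMatrix ℝ *ᵥ v) x = _
  rw [SimpleGraph.lapMatrix_mulVec_apply]
  rw [SimpleGraph.degree_eq_sum_if_adj, Finset.sum_mul]
  have : ∑ u ∈ H.neighborFinset x, v u = ∑ y : W, if H.Adj x y then v y else 0 := by
    have hnb : H.neighborFinset x = Finset.univ.filter (fun y => H.Adj x y) := by
      ext y; simp [SimpleGraph.mem_neighborFinset]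
    rw [hnb, Finset.sum_filter]
  rw [this, ← Finset.sum_sub_distrib]
  refine Finset.sum_congr rfl fun y _ => ?_
  split <;> simp

lemma symmDiff_flip {S : Finset (Fin n)} {a b : Fin n} (ha : a ∈ S) (hb : b ∉ S)
    (hab : a ≠ b) : S ∆ flF S a b = {a, b} := by
  ext x
  simp only [Finset.mem_symmDiff, flF, Finset.mem_insert, Finset.mem_erase,
    Finset.mem_singleton]
  by_cases hxa : x = a <;> by_cases hxb : x = b <;> subst_vars <;> tauto

/-- The bridge: the token-graph Laplacian acting on `v` equals `lapF` acting on the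
extension of `v`. -/
lemma token_lapF (G : SimpleGraph (Fin n)) (k : ℕ) (v : Lv n k → ℝ) (B : Lv n k) :
    (Lap (tokenGraph G k) *ᵥ v) B = lapF G (extF k v) B.1 := by
  classical
  rw [lap_mulVec_s7]
  show (∑ B' : Lv n k, if (tokenGraph G k).Adj B B' then v B - v B' else 0) = _
  show _ = ∑ a ∈ B.1, ∑ b ∈ B.1ᶜ,
      if G.Adj a b then extF k v B.1 - extF k v (flF B.1 a b) else 0
  rw [← Finset.sum_filter, ← Finset.sum_product']
  rw [← Finset.sum_filter (s := B.1 ×ˢ B.1ᶜ) (p := fun p => G.Adj p.1 p.2)]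
  refine (Finset.sum_bij (fun (p : Fin n × Fin n)
      (hp : p ∈ (B.1 ×ˢ B.1ᶜ).filter (fun p => G.Adj p.1 p.2)) =>
      (⟨flF B.1 p.1 p.2, by
        rw [card_flF (Finset.mem_product.1 (Finset.mem_filter.1 hp).1).1
          (Finset.mem_compl.1 (Finset.mem_product.1 (Finset.mem_filter.1 hp).1).2), B.2]⟩ :
        Lv n k)) ?_ ?_ ?_ ?_).symm
  · rintro ⟨a, b⟩ hp
    obtain ⟨hmem, hadj⟩ := Finset.mem_filter.1 hp
    obtain ⟨ha, hb⟩ := Finset.mem_product.1 hmem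
    rw [Finset.mem_compl] at hb
    simp only [Finset.mem_filter, Finset.mem_univ, true_and]
    exact ⟨a, b, ha, Finset.mem_insert_self _ _, hadj,
      symmDiff_flip ha hb (G.ne_of_adj hadj)⟩
  · rintro ⟨a, b⟩ hp ⟨a', b'⟩ hp' heq
    obtain ⟨hmem, hadj⟩ := Finset.mem_filter.1 hp
    obtain ⟨ha, hb⟩ := Finset.mem_product.1 hmem
    obtain ⟨hmem', hadj'⟩ := Finset.mem_filter.1 hp'
    obtain ⟨ha', hb'⟩ := Finset.mem_product.1 hmem'
    rw [Finset.mem_compl] at hb hb'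
    have hE : flF B.1 a b = flF B.1 a' b' := congrArg Subtype.val heq
    have hbb : b = b' := by
      have : b ∈ flF B.1 a' b' := hE ▸ Finset.mem_insert_self b (B.1.erase a)
      rcases Finset.mem_insert.1 this with h | h
      · exact h
      · exact absurd (Finset.mem_of_mem_erase h) hb
    subst hbb
    have hbe : b ∉ B.1.erase a := fun h => hb (Finset.mem_of_mem_erase h)
    have hbe' : b ∉ B.1.erase a' := fun h => hb (Finset.mem_of_mem_erase h)
    have hEE : B.1.erase a = B.1.erase a' := by
      have := congrArg (fun s => Finset.erase s b) hE
      simpa [flF, Finset.erase_insert hbe, Finset.erase_insert hbe'] using this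
    have : a = a' := by
      by_contra hne
      have : a ∈ B.1.erase a' := Finset.mem_erase.2 ⟨hne, ha⟩
      rw [← hEE] at this
      exact (Finset.notMem_erase a B.1) this
    simp [this]
  · intro B' hB'
    simp only [Finset.mem_filter, Finset.mem_univ, true_and] at hB'
    obtain ⟨a, b, ha, hb, hadj, hd⟩ := hB'
    have key : ∀ x, ((x ∈ B.1 ∧ x ∉ B'.1) ∨ (x ∈ B'.1 ∧ x ∉ B.1)) ↔ (x = a ∨ x = b) := by
      intro x
      rw [← Finset.mem_symmDiff, hd]
      simp
    have hbB : b ∉ B.1 := by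
      rcases (key b).2 (Or.inr rfl) with h | h
      · exact absurd hb h.2
      · exact h.2
    have haB' : a ∉ B'.1 := by
      rcases (key a).2 (Or.inl rfl) with h | h
      · exact h.2
      · exact absurd ha h.2
    refine ⟨(a, b), Finset.mem_filter.2 ⟨Finset.mem_product.2
      ⟨ha, Finset.mem_compl.2 hbB⟩, hadj⟩, ?_⟩
    refine Subtype.ext ?_
    show flF B.1 a b = B'.1
    ext x
    simp only [flF, Finset.mem_insert, Finset.mem_erase]
    have hx := key x
    by_cases hxa : x = a <;> by_cases hxb : x = b <;> subst_vars <;>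
      first
      | (simp_all; tauto)
      | tauto
  · rintro ⟨a, b⟩ hp
    obtain ⟨hmem, hadj⟩ := Finset.mem_filter.1 hp
    obtain ⟨ha, hb⟩ := Finset.mem_product.1 hmem
    rw [Finset.mem_compl] at hb
    rw [extF_apply]
    congr 1
    show extF k v _ = v _
    rw [extF]
    rw [dif_pos]

/-- `lapF` of an extension is the extension of the token-Laplacian image. -/
lemma lapF_extF (G : SimpleGraph (Fin n)) (k : ℕ) (v : Lv n k → ℝ) :
    lapF G (extF k v) = extF k (fun B => (Lap (tokenGraph G k) *ᵥ v) B) := by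
  funext S
  by_cases h : S.card = k
  · rw [show extF k (fun B => (Lap (tokenGraph G k) *ᵥ v) B) S
        = (Lap (tokenGraph G k) *ᵥ v) ⟨S, h⟩ from dif_pos h,
      token_lapF G k v ⟨S, h⟩]
  · rw [extF_eq_zero _ _ h]
    letI := Classical.decRel G.Adj
    show (∑ a ∈ S, ∑ b ∈ Sᶜ, if G.Adj a b then extF k v S - extF k v (flF S a b) else 0) = 0
    refine Finset.sum_eq_zero fun a ha => Finset.sum_eq_zero fun b hb => ?_
    rw [Finset.mem_compl] at hb
    rw [extF_eq_zero _ _ h, extF_eq_zero _ _ (by rw [card_flF ha hb]; exact h)]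
    split <;> simp

/-- Injectivity of the up operator below the middle level. -/
lemma up_inj (m : ℕ) (hm : 2 * m < n) (v : Lv n m → ℝ)
    (hv : ∀ S, upF (extF m v) S = 0) : v = 0 := by
  set v' := extF m v with hv'
  have hdown0 : ∀ S, downF (upF v') S = 0 := fun S => by
    unfold downF
    exact Finset.sum_eq_zero fun b _ => hv _
  have h0 : (0 : ℝ) = ∑ S : Finset (Fin n), downF (upF v') S * v' S := by
    simp [hdown0]
  have hsplit : ∀ S : Finset (Fin n), downF (upF v') S * v' S
      = upF (downF v') S * v' S + (((Sᶜ : Finset (Fin n)).card : ℝ) - S.card) * (v' S)^2 := by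
    intro S
    have := commF v' S
    have hd : downF (upF v') S = upF (downF v') S + ((Sᶜ : Finset (Fin n)).card : ℝ) * v' S
        - (S.card : ℝ) * v' S := by linarith
    rw [hd]; ring
  have hadj : ∑ S : Finset (Fin n), upF (downF v') S * v' S
      = ∑ S : Finset (Fin n), (downF v' S)^2 := by
    have := adjointF v' (downF v')
    calc ∑ S : Finset (Fin n), upF (downF v') S * v' S
        = ∑ S : Finset (Fin n), v' S * upF (downF v') S := by
          refine Finset.sum_congr rfl fun S _ => mul_comm _ _
      _ = ∑ S : Finset (Fin n), downF v' S * downF v' S := this.symm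
      _ = _ := by refine Finset.sum_congr rfl fun S _ => (sq _).symm
  rw [Finset.sum_congr rfl (fun S _ => hsplit S), Finset.sum_add_distrib, hadj] at h0
  have hterm : ∀ S : Finset (Fin n),
      0 ≤ (((Sᶜ : Finset (Fin n)).card : ℝ) - S.card) * (v' S)^2 := by
    intro S
    by_cases h : S.card = m
    · have hc : ((Sᶜ : Finset (Fin n)).card : ℝ) = n - S.card := by
        rw [Finset.card_compl, Fintype.card_fin]
        have := Finset.card_le_univ S
        rw [Fintype.card_fin] at this
        push_cast [Nat.cast_sub this]
        ring
      rw [hc, h]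
      have : (0:ℝ) < n - 2*m := by
        have : (2*m : ℝ) < n := by exact_mod_cast hm
        linarith
      refine mul_nonneg (by linarith) (sq_nonneg _)
    · rw [hv', extF_eq_zero m v h]
      simp
  have hsq : (0:ℝ) ≤ ∑ S : Finset (Fin n), (downF v' S)^2 :=
    Finset.sum_nonneg fun S _ => sq_nonneg _
  have hQ0 : ∑ S : Finset (Fin n), (((Sᶜ : Finset (Fin n)).card : ℝ) - S.card) * (v' S)^2 = 0 := by
    have hQ : (0:ℝ) ≤ ∑ S : Finset (Fin n),
        (((Sᶜ : Finset (Fin n)).card : ℝ) - S.card) * (v' S)^2 :=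
      Finset.sum_nonneg fun S _ => hterm S
    linarith
  have heach := (Finset.sum_eq_zero_iff_of_nonneg (fun S _ => hterm S)).1 hQ0
  funext A
  have hA := heach A.1 (Finset.mem_univ _)
  have hc : ((A.1ᶜ : Finset (Fin n)).card : ℝ) - A.1.card = n - 2*m := by
    rw [Finset.card_compl, Fintype.card_fin, A.2]
    have hm' : m ≤ n := by omega
    push_cast [Nat.cast_sub hm']
    ring
  rw [hc] at hA
  have hcoef : (0:ℝ) < n - 2*m := by
    have : (2*m : ℝ) < n := by exact_mod_cast hm
    linarith
  have hsq0 : (v' A.1)^2 = 0 := by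
    rcases mul_eq_zero.1 hA with h | h
    · linarith
    · exact h
  have : v' A.1 = 0 := pow_eq_zero_iff (by norm_num) |>.1 hsq0
  rw [hv', extF_apply] at this
  simpa using this

/-- The up operator at the level of token-graph vertex sets. -/
def upS (m : ℕ) (v : Lv n m → ℝ) (B : Lv n (m + 1)) : ℝ := upF (extF m v) B.1

lemma extF_upS (m : ℕ) (v : Lv n m → ℝ) :
    extF (m + 1) (upS m v) = upF (extF m v) := by
  funext S
  by_cases h : S.card = m + 1
  · rw [extF, dif_pos h]
    rfl
  · rw [extF_eq_zero _ _ h, upF_extF_vanish m v h]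

/-- The induction step: lifting an eigenvector one level up. -/
lemma step_lemma (G : SimpleGraph (Fin n)) (lam : ℝ) (m : ℕ) (hm : 2 * m < n)
    (v : Lv n m → ℝ) (hv0 : v ≠ 0)
    (hev : Lap (tokenGraph G m) *ᵥ v = lam • v) :
    upS m v ≠ 0 ∧ Lap (tokenGraph G (m + 1)) *ᵥ upS m v = lam • upS m v := by
  constructor
  · intro h0
    refine hv0 (up_inj m hm v fun S => ?_)
    have : extF (m + 1) (upS m v) S = 0 := by
      unfold extF
      split
      · rw [h0]; rfl
      · rfl
    rw [extF_upS] at this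
    exact this
  · funext B
    have h1 : (Lap (tokenGraph G (m + 1)) *ᵥ upS m v) B
        = lapF G (extF (m + 1) (upS m v)) B.1 := token_lapF G (m + 1) (upS m v) B
    rw [h1, extF_upS, lap_commF, lapF_extF]
    have h2 : extF m (fun A => (Lap (tokenGraph G m) *ᵥ v) A) = fun S => lam * extF m v S := by
      funext S
      unfold extF
      split
      · rw [hev]; rfl
      · simp
    rw [h2]
    have h3 : upF (fun S => lam * extF m v S) B.1 = lam * upF (extF m v) B.1 := by
      unfold upF
      rw [Finset.mul_sum]
    rw [h3]
    rfl

end TokenAux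

/-- For `1 ≤ h ≤ k ≤ n/2`, every Laplacian eigenvalue of the `h`-token
graph `F_h(G)` is a Laplacian eigenvalue of the `k`-token graph `F_k(G)`. -/
theorem eigenvalue_token_mono (n h k : ℕ) (hh : 1 ≤ h) (hhk : h ≤ k) (hkn : 2 * k ≤ n)
    (G : SimpleGraph (Fin n)) (lam : ℝ)
    (hlam : ∃ v : {s : Finset (Fin n) // s.card = h} → ℝ,
      v ≠ 0 ∧ Lap (tokenGraph G h) *ᵥ v = lam • v) :
    ∃ w : {s : Finset (Fin n) // s.card = k} → ℝ,
      w ≠ 0 ∧ Lap (tokenGraph G k) *ᵥ w = lam • w := by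
  have main : ∀ m, h ≤ m → m ≤ k →
      ∃ w : Lv n m → ℝ, w ≠ 0 ∧ Lap (tokenGraph G m) *ᵥ w = lam • w := by
    intro m hm
    induction m, hm using Nat.le_induction with
    | base => exact fun _ => hlam
    | succ m hm ih =>
      intro hmk
      obtain ⟨v, hv0, hev⟩ := ih (by omega)
      have hm' : 2 * m < n := by omega
      obtain ⟨h1, h2⟩ := step_lemma G lam m hm' v hv0 hev
      exact ⟨upS m v, h1, h2⟩
  exact main k hhk le_rfl
end

section
/- Let G be a finite simple graph on vertex set [n] and let k₁, k₂ be integers with 1 ≤ k₁ ≤ k₂ ≤ n. Let L_{k₁} and L_{k₂} be the Laplacian matrices of the token graphs F_{k₁}(G) and F_{k₂}(G), and let B be the (n;k₂,k₁)-binomial matrix. Then B L_{k₁} = L_{k₂} B. -/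
open Finset Matrix
open scoped symmDiff

section Helpers

open scoped Classical

variable {V : Type*} [DecidableEq V]

lemma swap_card {X : Finset V} {a b : V} (ha : a ∈ X) (hb : b ∉ X) :
    (insert b (X.erase a)).card = X.card := by
  have h1 : b ∉ X.erase a := fun h => hb (Finset.mem_of_mem_erase h)
  have h2 := Finset.card_pos.mpr ⟨a, ha⟩
  rw [Finset.card_insert_of_notMem h1, Finset.card_erase_of_mem ha]
  omega

lemma swap_symmDiff {X : Finset V} {a b : V} (ha : a ∈ X) (hb : b ∉ X) :
    X ∆ (insert b (X.erase a)) = {a, b} := by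
  have hab : a ≠ b := fun h => hb (h ▸ ha)
  ext x
  simp only [Finset.mem_symmDiff, Finset.mem_insert, Finset.mem_erase]
  by_cases hxa : x = a <;> by_cases hxb : x = b <;> subst_vars <;> simp_all

lemma swap_sdiff_left {X : Finset V} {a b : V} (ha : a ∈ X) (hb : b ∉ X) :
    X \ (insert b (X.erase a)) = {a} := by
  ext x
  simp only [Finset.mem_sdiff, Finset.mem_insert, Finset.mem_erase, Finset.mem_singleton]
  by_cases hxa : x = a <;> by_cases hxb : x = b <;> subst_vars <;> simp_all

lemma swap_sdiff_right {X : Finset V} {a b : V} (ha : a ∈ X) (hb : b ∉ X) :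
    (insert b (X.erase a)) \ X = {b} := by
  ext x
  simp only [Finset.mem_sdiff, Finset.mem_insert, Finset.mem_erase, Finset.mem_singleton]
  by_cases hxa : x = a <;> by_cases hxb : x = b <;> subst_vars <;> simp_all

lemma tokenGraph_adj_iff {G : SimpleGraph V} {k : ℕ} (Z W : {s : Finset V // s.card = k}) :
    (tokenGraph G k).Adj Z W ↔
      ∃ a b, a ∈ Z.1 ∧ b ∉ Z.1 ∧ G.Adj a b ∧ W.1 = insert b (Z.1.erase a) := by
  constructor
  · rintro ⟨a, b, ha, hb, hab, hd⟩
    have hane : a ≠ b := hab.ne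
    have haW : a ∉ W.1 := by
      have : a ∈ Z.1 ∆ W.1 := by rw [hd]; simp
      rw [Finset.mem_symmDiff] at this; tauto
    have hbZ : b ∉ Z.1 := by
      have : b ∈ Z.1 ∆ W.1 := by rw [hd]; simp
      rw [Finset.mem_symmDiff] at this; tauto
    refine ⟨a, b, ha, hbZ, hab, ?_⟩
    ext x
    have hx : x ∈ Z.1 ∆ W.1 ↔ x = a ∨ x = b := by rw [hd]; simp
    rw [Finset.mem_symmDiff] at hx
    simp only [Finset.mem_insert, Finset.mem_erase]
    by_cases hxa : x = a <;> by_cases hxb : x = b <;> subst_vars <;> simp_all <;> tauto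
  · rintro ⟨a, b, ha, hb, hab, hW⟩
    refine ⟨a, b, ha, ?_, hab, ?_⟩
    · rw [hW]; simp
    · rw [hW]; exact swap_symmDiff ha hb

lemma insert_erase_subset_iff {X A : Finset V} {a b : V} (ha : a ∈ X) :
    insert b (X.erase a) ⊆ A ↔ b ∈ A ∧ X \ A ⊆ {a} := by
  rw [Finset.insert_subset_iff]
  constructor
  · rintro ⟨hb, he⟩
    refine ⟨hb, fun x hx => ?_⟩
    rw [Finset.mem_sdiff] at hx
    rw [Finset.mem_singleton]
    by_contra hxa
    exact hx.2 (he (Finset.mem_erase.mpr ⟨hxa, hx.1⟩))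
  · rintro ⟨hb, hs⟩
    refine ⟨hb, fun x hx => ?_⟩
    rw [Finset.mem_erase] at hx
    by_contra hxA
    exact hx.1 (Finset.mem_singleton.mp (hs (Finset.mem_sdiff.mpr ⟨hx.2, hxA⟩)))

lemma subset_insert_erase_iff {A X : Finset V} {a b : V} (ha : a ∈ A) (hb : b ∉ A) :
    X ⊆ insert b (A.erase a) ↔ a ∉ X ∧ X \ A ⊆ {b} := by
  constructor
  · intro h
    constructor
    · intro haX
      have := h haX
      rw [Finset.mem_insert, Finset.mem_erase] at this
      rcases this with h1 | h2
      · exact hb (h1 ▸ ha)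
      · exact h2.1 rfl
    · intro x hx
      rw [Finset.mem_sdiff] at hx
      have := h hx.1
      rw [Finset.mem_insert, Finset.mem_erase] at this
      rw [Finset.mem_singleton]
      tauto
  · rintro ⟨haX, hs⟩ x hx
    rw [Finset.mem_insert, Finset.mem_erase]
    by_cases hxA : x ∈ A
    · right
      exact ⟨fun h => haX (h ▸ hx), hxA⟩
    · left
      exact Finset.mem_singleton.mp (hs (Finset.mem_sdiff.mpr ⟨hx, hxA⟩))

variable [Fintype V]

/-- The generic counting bijection: subsets adjacent to `Z` satisfying `Q` correspond
to pairs `(a, b)` with `a ∈ Z`, `b ∉ Z`, `a ~ b`. -/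
lemma card_adj_Q (G : SimpleGraph V) {k : ℕ} (Z : {s : Finset V // s.card = k})
    (Q : Finset V → Prop)
    [DecidablePred fun W : {s : Finset V // s.card = k} => (tokenGraph G k).Adj Z W ∧ Q W.1]
    [DecidablePred fun p : V × V => G.Adj p.1 p.2 ∧ Q (insert p.2 (Z.1.erase p.1))] :
    (univ.filter fun W : {s : Finset V // s.card = k} =>
        (tokenGraph G k).Adj Z W ∧ Q W.1).card =
    ((Z.1 ×ˢ Z.1ᶜ).filter fun p : V × V =>
        G.Adj p.1 p.2 ∧ Q (insert p.2 (Z.1.erase p.1))).card := by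
  refine (Finset.card_bij
    (i := fun (p : V × V) hp => (⟨insert p.2 (Z.1.erase p.1), ?_⟩ : {s : Finset V // s.card = k}))
    ?_ ?_ ?_).symm
  · rw [Finset.mem_filter, Finset.mem_product, Finset.mem_compl] at hp
    rw [swap_card hp.1.1 hp.1.2, Z.2]
  · intro p hp
    rw [Finset.mem_filter, Finset.mem_product, Finset.mem_compl] at hp
    rw [Finset.mem_filter]
    refine ⟨Finset.mem_univ _, ?_, hp.2.2⟩
    exact (tokenGraph_adj_iff Z _).mpr ⟨p.1, p.2, hp.1.1, hp.1.2, hp.2.1, rfl⟩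
  · intro p hp q hq h
    rw [Finset.mem_filter, Finset.mem_product, Finset.mem_compl] at hp hq
    have h' : insert p.2 (Z.1.erase p.1) = insert q.2 (Z.1.erase q.1) := congrArg Subtype.val h
    have ha1 : ({p.1} : Finset V) = {q.1} := by
      rw [← swap_sdiff_left hp.1.1 hp.1.2, ← swap_sdiff_left hq.1.1 hq.1.2, h']
    have ha2 : ({p.2} : Finset V) = {q.2} := by
      rw [← swap_sdiff_right hp.1.1 hp.1.2, ← swap_sdiff_right hq.1.1 hq.1.2, h']
    rw [Finset.singleton_inj] at ha1 ha2
    exact Prod.ext ha1 ha2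
  · intro W hW
    rw [Finset.mem_filter] at hW
    obtain ⟨a, b, ha, hb, hab, hWe⟩ := (tokenGraph_adj_iff Z W).mp hW.2.1
    refine ⟨(a, b), ?_, ?_⟩
    · rw [Finset.mem_filter, Finset.mem_product, Finset.mem_compl]
      exact ⟨⟨ha, hb⟩, hab, hWe ▸ hW.2.2⟩
    · exact Subtype.ext hWe.symm

lemma tokenGraph_degree (G : SimpleGraph V) {k : ℕ} (Z : {s : Finset V // s.card = k})
    [DecidableRel (tokenGraph G k).Adj] [DecidableRel G.Adj]
    [DecidablePred fun p : V × V => G.Adj p.1 p.2] :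
    (tokenGraph G k).degree Z =
      ((Z.1 ×ˢ Z.1ᶜ).filter fun p : V × V => G.Adj p.1 p.2).card := by
  calc (tokenGraph G k).degree Z
      = (univ.filter fun W : {s : Finset V // s.card = k} =>
          (tokenGraph G k).Adj Z W ∧ (fun _ => True) W.1).card := by
        rw [SimpleGraph.degree]
        congr 1
        ext W
        simp [SimpleGraph.mem_neighborFinset]
    _ = ((Z.1 ×ˢ Z.1ᶜ).filter fun p : V × V =>
          G.Adj p.1 p.2 ∧ (fun _ => True) (insert p.2 (Z.1.erase p.1))).card :=
        card_adj_Q G Z (fun _ => True)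
    _ = ((Z.1 ×ˢ Z.1ᶜ).filter fun p : V × V => G.Adj p.1 p.2).card := by
        congr 1
        ext p
        simp [Finset.mem_filter]

end Helpers


section H2
open scoped Classical
variable {V : Type*} [DecidableEq V] [Fintype V]

lemma Lap_apply (G : SimpleGraph V) (u v : V) :
    Lap G u v = (if u = v then (G.degree u : ℝ) else 0) - (if G.Adj u v then 1 else 0) := by
  unfold Lap
  rw [SimpleGraph.lapMatrix, Matrix.sub_apply, SimpleGraph.degMatrix, Matrix.diagonal_apply,
    SimpleGraph.adjMatrix_apply]

noncomputable def adjCount (G : SimpleGraph V) (S T : Finset V) : ℕ :=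
  ∑ a ∈ S, ∑ b ∈ T, if G.Adj a b then 1 else 0

lemma cnt_eq (G : SimpleGraph V) (S T : Finset V) :
    ((S ×ˢ T).filter fun p : V × V => G.Adj p.1 p.2).card = adjCount G S T := by
  rw [Finset.card_filter, Finset.sum_product, adjCount]

lemma adjCount_union_right (G : SimpleGraph V) {S T₁ T₂ : Finset V} (h : Disjoint T₁ T₂) :
    adjCount G S (T₁ ∪ T₂) = adjCount G S T₁ + adjCount G S T₂ := by
  unfold adjCount
  rw [← Finset.sum_add_distrib]
  exact Finset.sum_congr rfl fun a _ => Finset.sum_union h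

lemma adjCount_union_left (G : SimpleGraph V) {S₁ S₂ T : Finset V} (h : Disjoint S₁ S₂) :
    adjCount G (S₁ ∪ S₂) T = adjCount G S₁ T + adjCount G S₂ T := by
  unfold adjCount
  exact Finset.sum_union h

end H2


/-- For `1 ≤ k₁ ≤ k₂ ≤ n` and `B` the `(n;k₂,k₁)`-binomial matrix:
`B L_{k₁} = L_{k₂} B`. -/
theorem binMatrix2_mul_lap_comm (n k₁ k₂ : ℕ) (h1 : 1 ≤ k₁) (h2 : k₁ ≤ k₂) (h3 : k₂ ≤ n)
    (G : SimpleGraph (Fin n)) :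
    binMatrix2 n k₂ k₁ * Lap (tokenGraph G k₁) =
      Lap (tokenGraph G k₂) * binMatrix2 n k₂ k₁ := by
  classical
  ext A X
  rw [Matrix.mul_apply, Matrix.mul_apply]
  -- rewrite each LHS summand
  have hL : ∀ Y : {s : Finset (Fin n) // s.card = k₁},
      binMatrix2 n k₂ k₁ A Y * Lap (tokenGraph G k₁) Y X
        = (if Y = X then (if X.1 ⊆ A.1 then ((tokenGraph G k₁).degree X : ℝ) else 0) else 0)
          - (if (tokenGraph G k₁).Adj X Y ∧ Y.1 ⊆ A.1 then 1 else 0) := by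
    intro Y
    rw [Lap_apply, binMatrix2]
    simp only [Matrix.of_apply]
    rw [(tokenGraph G k₁).adj_comm]
    by_cases hs : Y.1 ⊆ A.1 <;> by_cases he : Y = X <;>
      by_cases ha : (tokenGraph G k₁).Adj X Y <;> subst_vars <;> simp_all <;> ring
  have hR : ∀ C : {s : Finset (Fin n) // s.card = k₂},
      Lap (tokenGraph G k₂) A C * binMatrix2 n k₂ k₁ C X
        = (if A = C then (if X.1 ⊆ A.1 then ((tokenGraph G k₂).degree A : ℝ) else 0) else 0)
          - (if (tokenGraph G k₂).Adj A C ∧ X.1 ⊆ C.1 then 1 else 0) := by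
    intro C
    rw [Lap_apply, binMatrix2]
    simp only [Matrix.of_apply]
    by_cases hs : X.1 ⊆ C.1 <;> by_cases he : A = C <;>
      by_cases ha : (tokenGraph G k₂).Adj A C <;> subst_vars <;> simp_all <;> ring
  simp only [hL, hR, Finset.sum_sub_distrib, Finset.sum_ite_eq, Finset.sum_ite_eq',
    Finset.mem_univ, if_true, Finset.sum_boole]
  -- now express the filter cardinalities as pair counts
  rw [card_adj_Q G X (fun s => s ⊆ A.1), card_adj_Q G A (fun s => X.1 ⊆ s),
    tokenGraph_degree G X, tokenGraph_degree G A]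
  by_cases h : X.1 ⊆ A.1
  · simp only [h, if_true]
    have hC1 : ((X.1 ×ˢ X.1ᶜ).filter fun p : Fin n × Fin n =>
          G.Adj p.1 p.2 ∧ insert p.2 (X.1.erase p.1) ⊆ A.1)
        = ((X.1 ×ˢ (A.1 \ X.1)).filter fun p : Fin n × Fin n => G.Adj p.1 p.2) := by
      ext p
      simp only [Finset.mem_filter, Finset.mem_product, Finset.mem_compl, Finset.mem_sdiff]
      constructor
      · rintro ⟨⟨hp1, hp2⟩, hadj, hsub⟩
        have := (insert_erase_subset_iff hp1).mp hsub
        exact ⟨⟨hp1, this.1, hp2⟩, hadj⟩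
      · rintro ⟨⟨hp1, hp2A, hp2X⟩, hadj⟩
        refine ⟨⟨hp1, hp2X⟩, hadj, (insert_erase_subset_iff hp1).mpr ⟨hp2A, ?_⟩⟩
        rw [Finset.sdiff_eq_empty_iff_subset.mpr h]
        exact Finset.empty_subset _
    have hC2 : ((A.1 ×ˢ A.1ᶜ).filter fun p : Fin n × Fin n =>
          G.Adj p.1 p.2 ∧ X.1 ⊆ insert p.2 (A.1.erase p.1))
        = (((A.1 \ X.1) ×ˢ A.1ᶜ).filter fun p : Fin n × Fin n => G.Adj p.1 p.2) := by
      ext p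
      simp only [Finset.mem_filter, Finset.mem_product, Finset.mem_compl, Finset.mem_sdiff]
      constructor
      · rintro ⟨⟨hp1, hp2⟩, hadj, hsub⟩
        have := (subset_insert_erase_iff hp1 hp2).mp hsub
        exact ⟨⟨⟨hp1, this.1⟩, hp2⟩, hadj⟩
      · rintro ⟨⟨⟨hp1A, hp1X⟩, hp2⟩, hadj⟩
        refine ⟨⟨hp1A, hp2⟩, hadj, (subset_insert_erase_iff hp1A hp2).mpr ⟨hp1X, ?_⟩⟩
        rw [Finset.sdiff_eq_empty_iff_subset.mpr h]
        exact Finset.empty_subset _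
    rw [hC1, hC2, cnt_eq, cnt_eq, cnt_eq, cnt_eq]
    have hXc : X.1ᶜ = (A.1 \ X.1) ∪ A.1ᶜ := by
      ext x
      simp only [Finset.mem_compl, Finset.mem_union, Finset.mem_sdiff]
      constructor
      · intro hx
        by_cases hxA : x ∈ A.1
        · exact Or.inl ⟨hxA, hx⟩
        · exact Or.inr hxA
      · rintro (⟨_, hx⟩ | hx)
        · exact hx
        · exact fun hxX => hx (h hxX)
    have hAu : A.1 = X.1 ∪ (A.1 \ X.1) := (Finset.union_sdiff_of_subset h).symm
    have hd1 : Disjoint (A.1 \ X.1) A.1ᶜ :=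
      Finset.disjoint_right.mpr fun x hx => by
        simp only [Finset.mem_compl, not_not] at hx
        simp [Finset.mem_sdiff, hx]
    have hd2 : Disjoint X.1 (A.1 \ X.1) := Finset.disjoint_sdiff
    have e1 : adjCount G X.1 X.1ᶜ = adjCount G X.1 (A.1 \ X.1) + adjCount G X.1 A.1ᶜ := by
      rw [hXc]
      exact adjCount_union_right G hd1
    have e2 : adjCount G A.1 A.1ᶜ = adjCount G X.1 A.1ᶜ + adjCount G (A.1 \ X.1) A.1ᶜ := by
      have e2' := adjCount_union_left G (T := A.1ᶜ) hd2
      rw [← hAu] at e2'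
      exact e2'
    rw [e1, e2]
    push_cast
    ring
  · simp only [h, if_false]
    have hne : (X.1 \ A.1).Nonempty := Finset.sdiff_nonempty.mpr h
    have key : ∀ c : Fin n, X.1 \ A.1 ⊆ {c} → c ∈ X.1 \ A.1 := by
      intro c hc
      obtain ⟨x, hx⟩ := hne
      have := hc hx
      rw [Finset.mem_singleton] at this
      exact this ▸ hx
    have hC1 : ((X.1 ×ˢ X.1ᶜ).filter fun p : Fin n × Fin n =>
          G.Adj p.1 p.2 ∧ insert p.2 (X.1.erase p.1) ⊆ A.1)
        = ((X.1 ×ˢ X.1ᶜ).filter fun p : Fin n × Fin n =>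
          G.Adj p.1 p.2 ∧ p.2 ∈ A.1 ∧ X.1 \ A.1 ⊆ {p.1}) := by
      apply Finset.filter_congr
      intro p hp
      rw [Finset.mem_product] at hp
      rw [insert_erase_subset_iff hp.1]
    have hC2 : ((A.1 ×ˢ A.1ᶜ).filter fun p : Fin n × Fin n =>
          G.Adj p.1 p.2 ∧ X.1 ⊆ insert p.2 (A.1.erase p.1))
        = ((A.1 ×ˢ A.1ᶜ).filter fun p : Fin n × Fin n =>
          G.Adj p.1 p.2 ∧ p.1 ∉ X.1 ∧ X.1 \ A.1 ⊆ {p.2}) := by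
      apply Finset.filter_congr
      intro p hp
      rw [Finset.mem_product, Finset.mem_compl] at hp
      rw [subset_insert_erase_iff hp.1 hp.2]
    rw [hC1, hC2]
    have hcard : ((X.1 ×ˢ X.1ᶜ).filter fun p : Fin n × Fin n =>
          G.Adj p.1 p.2 ∧ p.2 ∈ A.1 ∧ X.1 \ A.1 ⊆ {p.1}).card
        = ((A.1 ×ˢ A.1ᶜ).filter fun p : Fin n × Fin n =>
          G.Adj p.1 p.2 ∧ p.1 ∉ X.1 ∧ X.1 \ A.1 ⊆ {p.2}).card := by
      refine Finset.card_bij (fun p _ => p.swap) ?_ ?_ ?_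
      · intro p hp
        rw [Finset.mem_filter, Finset.mem_product, Finset.mem_compl] at hp
        obtain ⟨⟨hp1X, hp2X⟩, hadj, hp2A, hsub⟩ := hp
        have h1 := key _ hsub
        rw [Finset.mem_sdiff] at h1
        rw [Finset.mem_filter, Finset.mem_product, Finset.mem_compl]
        exact ⟨⟨hp2A, h1.2⟩, hadj.symm, hp2X, hsub⟩
      · intro p hp q hq hpq
        exact Prod.swap_injective hpq
      · intro q hq
        rw [Finset.mem_filter, Finset.mem_product, Finset.mem_compl] at hq
        obtain ⟨⟨hq1A, hq2A⟩, hadj, hq1X, hsub⟩ := hq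
        have h1 := key _ hsub
        rw [Finset.mem_sdiff] at h1
        refine ⟨q.swap, ?_, Prod.swap_swap q⟩
        rw [Finset.mem_filter, Finset.mem_product, Finset.mem_compl]
        exact ⟨⟨h1.1, hq1X⟩, hadj.symm, hq1A, hsub⟩
    rw [hcard]
end

section
/- Let G be a finite simple graph on vertex set [n] and let k₁, k₂ be integers with 1 ≤ k₁ ≤ k₂ ≤ n. Let L_{k₁} and L_{k₂} be the Laplacian matrices of F_{k₁}(G) and F_{k₂}(G), and let B be the (n;k₂,k₁)-binomial matrix. Then Bᵀ L_{k₂} B = Bᵀ B L_{k₁}. -/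
open Finset Matrix
open scoped symmDiff

namespace TokenProofAux

variable {n : ℕ}

lemma sd_insert_erase {A : Finset (Fin n)} {a b : Fin n} (ha : a ∈ A) (hb : b ∉ A) :
    A ∆ insert b (A.erase a) = {a, b} := by
  have hab : a ≠ b := fun h => hb (h ▸ ha)
  ext x
  simp only [Finset.mem_symmDiff, Finset.mem_insert, Finset.mem_erase,
    Finset.mem_singleton]
  by_cases hxa : x = a <;> by_cases hxb : x = b <;> subst_vars <;> tauto

lemma erase_card_insert {A : Finset (Fin n)} {a b : Fin n} (ha : a ∈ A) (hb : b ∉ A) :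
    (insert b (A.erase a)).card = A.card := by
  have h1 : b ∉ A.erase a := fun h => hb (Finset.mem_of_mem_erase h)
  rw [Finset.card_insert_of_notMem h1, Finset.card_erase_of_mem ha]
  have := Finset.card_pos.mpr ⟨a, ha⟩
  omega

lemma subset_insert_erase_iff {A Y : Finset (Fin n)} {a b : Fin n} (ha : a ∈ A) (hb : b ∉ A) :
    Y ⊆ insert b (A.erase a) ↔ a ∉ Y ∧ Y.erase b ⊆ A := by
  have hab : a ≠ b := fun h => hb (h ▸ ha)
  rw [Finset.subset_insert_iff, Finset.subset_erase]
  simp only [Finset.mem_erase]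
  constructor
  · rintro ⟨h1, h2⟩; exact ⟨fun h => h2 ⟨hab, h⟩, h1⟩
  · rintro ⟨h1, h2⟩; exact ⟨h2, fun h => h1 h.2⟩

/-- Reconstruction: if `A ∆ C = {a,b}` with `a ∈ A`, `b ∈ C`, `a ≠ b`,
then `C = insert b (A.erase a)`, `a ∉ C`, `b ∉ A`. -/
lemma recon {A C : Finset (Fin n)} {a b : Fin n} (hab : a ≠ b)
    (ha : a ∈ A) (hb : b ∈ C) (hd : A ∆ C = {a, b}) :
    b ∉ A ∧ a ∉ C ∧ C = insert b (A.erase a) := by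
  have key : ∀ x : Fin n, ((x ∈ A ∧ x ∉ C) ∨ (x ∈ C ∧ x ∉ A)) ↔ (x = a ∨ x = b) := by
    intro x
    have := Finset.ext_iff.mp hd x
    simpa [Finset.mem_symmDiff] using this
  have hbA : b ∉ A := by
    have := (key b).mpr (Or.inr rfl); tauto
  have haC : a ∉ C := by
    have := (key a).mpr (Or.inl rfl); tauto
  refine ⟨hbA, haC, ?_⟩
  ext x
  simp only [Finset.mem_insert, Finset.mem_erase]
  have := key x
  by_cases hxa : x = a <;> by_cases hxb : x = b <;> subst_vars <;> tauto

/-- move token from `a` to `b` -/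
def phi {k : ℕ} (A : {s : Finset (Fin n) // s.card = k}) (a b : Fin n) :
    {s : Finset (Fin n) // s.card = k} :=
  if h : a ∈ A.1 ∧ b ∉ A.1 then ⟨insert b (A.1.erase a), by rw [erase_card_insert h.1 h.2, A.2]⟩
  else A

lemma phi_val {k : ℕ} {A : {s : Finset (Fin n) // s.card = k}} {a b : Fin n}
    (h : a ∈ A.1 ∧ b ∉ A.1) : (phi A a b).1 = insert b (A.1.erase a) := by
  rw [phi, dif_pos h]

variable {G : SimpleGraph (Fin n)}

lemma token_adj_phi {k : ℕ} {A : {s : Finset (Fin n) // s.card = k}} {a b : Fin n}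
    (h : a ∈ A.1 ∧ b ∉ A.1) (hadj : G.Adj a b) : (tokenGraph G k).Adj A (phi A a b) :=
  ⟨a, b, h.1, by rw [phi_val h]; exact Finset.mem_insert_self b _, hadj,
    by rw [phi_val h]; exact sd_insert_erase h.1 h.2⟩

lemma lap_row {k : ℕ} [DecidableRel G.Adj] [DecidableRel (tokenGraph G k).Adj]
    (A : {s : Finset (Fin n) // s.card = k}) (g : {s : Finset (Fin n) // s.card = k} → ℝ) :
    ∑ C, ((tokenGraph G k).lapMatrix ℝ) A C * g C
      = ∑ p ∈ Finset.univ.filter (fun p : Fin n × Fin n => G.Adj p.1 p.2),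
          if p.1 ∈ A.1 ∧ p.2 ∉ A.1 then g A - g (phi A p.1 p.2) else 0 := by
  have hmv : ∑ C, ((tokenGraph G k).lapMatrix ℝ) A C * g C
      = ((tokenGraph G k).lapMatrix ℝ *ᵥ g) A := rfl
  rw [hmv, SimpleGraph.lapMatrix_mulVec_apply]
  -- pairs set
  set P : Finset (Fin n × Fin n) :=
    Finset.univ.filter (fun p : Fin n × Fin n => G.Adj p.1 p.2 ∧ p.1 ∈ A.1 ∧ p.2 ∉ A.1) with hP
  have hsum : ∑ p ∈ Finset.univ.filter (fun p : Fin n × Fin n => G.Adj p.1 p.2),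
        (if p.1 ∈ A.1 ∧ p.2 ∉ A.1 then g A - g (phi A p.1 p.2) else 0)
      = ∑ p ∈ P, (g A - g (phi A p.1 p.2)) := by
    rw [Finset.sum_ite, Finset.sum_const_zero, add_zero, hP]
    apply Finset.sum_congr _ (fun _ _ => rfl)
    ext p
    simp [and_assoc]
  rw [hsum]
  -- bijection between P and neighborFinset A
  have hbij : ∀ f : {s : Finset (Fin n) // s.card = k} → ℝ,
      ∑ p ∈ P, f (phi A p.1 p.2) = ∑ C ∈ (tokenGraph G k).neighborFinset A, f C := by
    intro f
    apply Finset.sum_nbij (fun p => phi A p.1 p.2)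
    · intro p hp
      rw [hP, Finset.mem_filter] at hp
      rw [SimpleGraph.mem_neighborFinset]
      exact token_adj_phi ⟨hp.2.2.1, hp.2.2.2⟩ hp.2.1
    · intro p hp q hq hpq
      simp only [Finset.coe_filter, Set.mem_setOf_eq, hP, Finset.mem_filter] at hp hq
      have hp' := hp.2.2; have hq' := hq.2.2
      have h1 : (phi A p.1 p.2).1 = insert p.2 (A.1.erase p.1) := phi_val hp'
      have h2 : (phi A q.1 q.2).1 = insert q.2 (A.1.erase q.1) := phi_val hq'
      have heq : insert p.2 (A.1.erase p.1) = insert q.2 (A.1.erase q.1) := by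
        rw [← h1, ← h2]; exact congrArg Subtype.val hpq
      -- p.2 = q.2
      have hb : p.2 = q.2 := by
        have hq2 : q.2 ∈ insert p.2 (A.1.erase p.1) := heq ▸ Finset.mem_insert_self _ _
        rcases Finset.mem_insert.mp hq2 with h | h
        · exact h.symm
        · exact absurd (Finset.mem_of_mem_erase h) hq.2.2.2
      -- p.1 = q.1
      have ha : p.1 = q.1 := by
        by_contra hne
        have h1' : p.1 ∈ insert p.2 (A.1.erase p.1) := by
          rw [heq]
          exact Finset.mem_insert_of_mem (Finset.mem_erase.mpr ⟨hne, hp.2.2.1⟩)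
        rcases Finset.mem_insert.mp h1' with h | h
        · exact hp.2.2.2 (h ▸ hp.2.2.1)
        · exact (Finset.mem_erase.mp h).1 rfl
      exact Prod.ext ha hb
    · intro C hC
      simp only [Finset.mem_coe, SimpleGraph.mem_neighborFinset] at hC
      obtain ⟨a, b, ha, hb, hadj, hd⟩ := hC
      obtain ⟨hbA, haC, hCeq⟩ := recon (G.ne_of_adj hadj) ha hb hd
      refine ⟨(a, b), ?_, ?_⟩
      · simp only [Finset.mem_coe, hP, Finset.mem_filter]
        exact ⟨Finset.mem_univ _, hadj, ha, hbA⟩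
      · apply Subtype.ext
        rw [phi_val ⟨ha, hbA⟩, ← hCeq]
    · intro p hp; rfl
  rw [← hbij g]
  have hdeg : ((tokenGraph G k).degree A : ℝ) = (P.card : ℝ) := by
    have h1 := hbij (fun _ => (1:ℝ))
    simp only [Finset.sum_const, nsmul_eq_mul, mul_one] at h1
    rw [SimpleGraph.degree, ← h1]
  rw [hdeg, Finset.sum_sub_distrib, Finset.sum_const, nsmul_eq_mul]

lemma key_pt (X Y A : Finset (Fin n)) {a b : Fin n} (hab : a ≠ b) :
    (if X ⊆ A then (1:ℝ) else 0) *
        ((if a ∈ A ∧ b ∉ A then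
            (if Y ⊆ A then (1:ℝ) else 0) - (if Y ⊆ insert b (A.erase a) then 1 else 0) else 0)
         + (if b ∈ A ∧ a ∉ A then
            (if Y ⊆ A then (1:ℝ) else 0) - (if Y ⊆ insert a (A.erase b) then 1 else 0) else 0))
    = (if a ∈ Y ∧ b ∉ Y then
          (if X ⊆ A ∧ Y ⊆ A then (1:ℝ) else 0)
            - (if X ⊆ A ∧ insert b (Y.erase a) ⊆ A then 1 else 0)
        else 0)
      + (if b ∈ Y ∧ a ∉ Y then
          (if X ⊆ A ∧ Y ⊆ A then (1:ℝ) else 0)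
            - (if X ⊆ A ∧ insert a (Y.erase b) ⊆ A then 1 else 0)
        else 0) := by
  by_cases hX : X ⊆ A
  · simp only [hX, if_pos, true_and, one_mul]
    by_cases haA : a ∈ A <;> by_cases hbA : b ∈ A <;>
      by_cases haY : a ∈ Y <;> by_cases hbY : b ∈ Y <;>
      simp only [haA, hbA, haY, hbY, not_true, not_false_iff, true_and, and_true, false_and,
        and_false, if_true, if_false, Finset.insert_subset_iff, Finset.erase_eq_of_notMem,
        sub_self, add_zero, zero_add, sub_zero, zero_sub] <;>
      all_goals (
      try simp only [subset_insert_erase_iff haA hbA]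
      try simp only [subset_insert_erase_iff hbA haA]
      try simp only [Finset.erase_subset_iff_of_mem haA]
      try simp only [Finset.erase_subset_iff_of_mem hbA]
      try simp only [Finset.erase_eq_of_notMem haY]
      try simp only [Finset.erase_eq_of_notMem hbY]
      try simp only [haY, hbY, haA, hbA, not_true, not_false_iff, true_and, false_and,
        and_true, and_false, if_true, if_false, sub_self, add_zero, zero_add, sub_zero, zero_sub]
      try (have hnq : ¬ (Y ⊆ A) := fun h => haA (h haY); simp only [hnq, if_false])
      try (have hnq : ¬ (Y ⊆ A) := fun h => hbA (h hbY); simp only [hnq, if_false])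
      try (first
        | ring
        | (split_ifs <;> simp_all)))
  · simp [hX]

lemma ite_congr_branch {c : Prop} [Decidable c] {x y z : ℝ} (h : c → x = y) :
    (if c then x else z) = (if c then y else z) := by
  split_ifs with hc
  · exact h hc
  · rfl

end TokenProofAux

open TokenProofAux in
/-- For `1 ≤ k₁ ≤ k₂ ≤ n` and `B` the `(n;k₂,k₁)`-binomial matrix:
`Bᵀ L_{k₂} B = Bᵀ B L_{k₁}`. -/
theorem binMatrix2_conj_lap (n k₁ k₂ : ℕ) (h1 : 1 ≤ k₁) (h2 : k₁ ≤ k₂) (h3 : k₂ ≤ n)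
    (G : SimpleGraph (Fin n)) :
    (binMatrix2 n k₂ k₁)ᵀ * Lap (tokenGraph G k₂) * binMatrix2 n k₂ k₁ =
      (binMatrix2 n k₂ k₁)ᵀ * binMatrix2 n k₂ k₁ * Lap (tokenGraph G k₁) := by
  classical
  set E : Finset (Fin n × Fin n) :=
    Finset.univ.filter (fun p : Fin n × Fin n => G.Adj p.1 p.2) with hE
  have lapr : ∀ (k : ℕ) (A : {s : Finset (Fin n) // s.card = k})
      (g : {s : Finset (Fin n) // s.card = k} → ℝ),
      ∑ C, Lap (tokenGraph G k) A C * g C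
        = ∑ p ∈ E, if p.1 ∈ A.1 ∧ p.2 ∉ A.1 then g A - g (phi A p.1 p.2) else 0 := by
    intro k A g
    letI : DecidableRel (tokenGraph G k).Adj := Classical.decRel _
    exact lap_row A g
  ext X Y
  -- LHS
  have hLHS : ((binMatrix2 n k₂ k₁)ᵀ * Lap (tokenGraph G k₂) * binMatrix2 n k₂ k₁) X Y
      = ∑ p ∈ E, ∑ A : {s : Finset (Fin n) // s.card = k₂},
          (if X.1 ⊆ A.1 then (1:ℝ) else 0) *
            (if p.1 ∈ A.1 ∧ p.2 ∉ A.1 then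
              (if Y.1 ⊆ A.1 then (1:ℝ) else 0)
                - (if Y.1 ⊆ (phi A p.1 p.2).1 then 1 else 0)
             else 0) := by
    simp only [Matrix.mul_apply, Matrix.transpose_apply, Finset.sum_mul]
    have step : ∀ yA : {s : Finset (Fin n) // s.card = k₂},
        ∑ x, binMatrix2 n k₂ k₁ yA X * Lap (tokenGraph G k₂) yA x * binMatrix2 n k₂ k₁ x Y
        = ∑ p ∈ E, (if X.1 ⊆ yA.1 then (1:ℝ) else 0) *
            (if p.1 ∈ yA.1 ∧ p.2 ∉ yA.1 then
              (if Y.1 ⊆ yA.1 then (1:ℝ) else 0)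
                - (if Y.1 ⊆ (phi yA p.1 p.2).1 then 1 else 0) else 0) := by
      intro yA
      simp only [mul_assoc, ← Finset.mul_sum]
      rw [lapr k₂ yA (fun C => binMatrix2 n k₂ k₁ C Y), Finset.mul_sum]
      simp only [binMatrix2, Matrix.of_apply]
      exact (Finset.mul_sum _ _ _).symm
    have hc := Finset.sum_congr rfl (fun yA (_ : yA ∈ (Finset.univ : Finset {s : Finset (Fin n) // s.card = k₂})) => step yA)
    rw [Finset.sum_comm, hc]
    exact Finset.sum_comm
  -- RHS
  have lsymm : ∀ (Z W : {s : Finset (Fin n) // s.card = k₁}),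
      Lap (tokenGraph G k₁) Z W = Lap (tokenGraph G k₁) W Z := by
    intro Z W
    letI : DecidableRel (tokenGraph G k₁).Adj := Classical.decRel _
    show SimpleGraph.lapMatrix ℝ (tokenGraph G k₁) Z W = SimpleGraph.lapMatrix ℝ (tokenGraph G k₁) W Z
    exact (SimpleGraph.isSymm_lapMatrix (tokenGraph G k₁) (R := ℝ)).apply W Z
  have hRHS : ((binMatrix2 n k₂ k₁)ᵀ * binMatrix2 n k₂ k₁ * Lap (tokenGraph G k₁)) X Y
      = ∑ p ∈ E, ∑ A : {s : Finset (Fin n) // s.card = k₂},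
          (if p.1 ∈ Y.1 ∧ p.2 ∉ Y.1 then
            (if X.1 ⊆ A.1 ∧ Y.1 ⊆ A.1 then (1:ℝ) else 0)
              - (if X.1 ⊆ A.1 ∧ (phi Y p.1 p.2).1 ⊆ A.1 then 1 else 0)
           else 0) := by
    simp only [Matrix.mul_apply, Matrix.transpose_apply]
    have e1 : ∀ Z : {s : Finset (Fin n) // s.card = k₁},
        (∑ A, binMatrix2 n k₂ k₁ A X * binMatrix2 n k₂ k₁ A Z) * Lap (tokenGraph G k₁) Z Y
        = Lap (tokenGraph G k₁) Y Z *
            (∑ A : {s : Finset (Fin n) // s.card = k₂},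
              if X.1 ⊆ A.1 ∧ Z.1 ⊆ A.1 then (1:ℝ) else 0) := by
      intro Z
      rw [lsymm Z Y, mul_comm]
      congr 1
      apply Finset.sum_congr rfl
      intro A _
      simp only [binMatrix2, Matrix.of_apply, ite_zero_mul_ite_zero, mul_one]
    rw [Finset.sum_congr rfl (fun Z _ => e1 Z),
      lapr k₁ Y (fun Z => ∑ A : {s : Finset (Fin n) // s.card = k₂},
        if X.1 ⊆ A.1 ∧ Z.1 ⊆ A.1 then (1:ℝ) else 0)]
    apply Finset.sum_congr rfl
    intro p _
    by_cases hc : p.1 ∈ Y.1 ∧ p.2 ∉ Y.1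
    · simp only [hc, if_true, and_true, true_and, not_false_eq_true, not_false_iff,
        ← Finset.sum_sub_distrib]
    · simp [hc]
  rw [hLHS, hRHS]
  -- symmetrization
  have hswap : ∀ f : Fin n × Fin n → ℝ, ∑ p ∈ E, f p = ∑ p ∈ E, f p.swap := by
    intro f
    apply Finset.sum_nbij' Prod.swap Prod.swap
    · intro p hp
      simp only [hE, Finset.mem_filter, Finset.mem_univ, true_and] at hp ⊢
      exact hp.symm
    · intro p hp
      simp only [hE, Finset.mem_filter, Finset.mem_univ, true_and] at hp ⊢
      exact hp.symm
    · intro p _; rfl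
    · intro p _; rfl
    · intro p _; rfl
  set F : Fin n × Fin n → ℝ := fun p => ∑ A : {s : Finset (Fin n) // s.card = k₂},
      (if X.1 ⊆ A.1 then (1:ℝ) else 0) *
        (if p.1 ∈ A.1 ∧ p.2 ∉ A.1 then
          (if Y.1 ⊆ A.1 then (1:ℝ) else 0)
            - (if Y.1 ⊆ (phi A p.1 p.2).1 then 1 else 0) else 0) with hF
  set H : Fin n × Fin n → ℝ := fun p => ∑ A : {s : Finset (Fin n) // s.card = k₂},
      (if p.1 ∈ Y.1 ∧ p.2 ∉ Y.1 then
        (if X.1 ⊆ A.1 ∧ Y.1 ⊆ A.1 then (1:ℝ) else 0)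
          - (if X.1 ⊆ A.1 ∧ (phi Y p.1 p.2).1 ⊆ A.1 then 1 else 0)
       else 0) with hH
  show ∑ p ∈ E, F p = ∑ p ∈ E, H p
  have key : ∀ p ∈ E, F p + F p.swap = H p + H p.swap := by
    intro p hp
    simp only [hE, Finset.mem_filter, Finset.mem_univ, true_and] at hp
    have hab : p.1 ≠ p.2 := G.ne_of_adj hp
    rw [hF, hH]
    simp only [Prod.fst_swap, Prod.snd_swap, ← Finset.sum_add_distrib]
    apply Finset.sum_congr rfl
    intro A _
    rw [← mul_add]
    -- replace phi by insert/erase inside the conditionals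
    have r1 : (if p.1 ∈ A.1 ∧ p.2 ∉ A.1 then
          (if Y.1 ⊆ A.1 then (1:ℝ) else 0)
            - (if Y.1 ⊆ (phi A p.1 p.2).1 then 1 else 0) else 0)
        = (if p.1 ∈ A.1 ∧ p.2 ∉ A.1 then
          (if Y.1 ⊆ A.1 then (1:ℝ) else 0)
            - (if Y.1 ⊆ insert p.2 (A.1.erase p.1) then 1 else 0) else 0) :=
      ite_congr_branch (fun hc => by rw [phi_val hc])
    have r2 : (if p.2 ∈ A.1 ∧ p.1 ∉ A.1 then
          (if Y.1 ⊆ A.1 then (1:ℝ) else 0)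
            - (if Y.1 ⊆ (phi A p.2 p.1).1 then 1 else 0) else 0)
        = (if p.2 ∈ A.1 ∧ p.1 ∉ A.1 then
          (if Y.1 ⊆ A.1 then (1:ℝ) else 0)
            - (if Y.1 ⊆ insert p.1 (A.1.erase p.2) then 1 else 0) else 0) :=
      ite_congr_branch (fun hc => by rw [phi_val hc])
    have r3 : (if p.1 ∈ Y.1 ∧ p.2 ∉ Y.1 then
          (if X.1 ⊆ A.1 ∧ Y.1 ⊆ A.1 then (1:ℝ) else 0)
            - (if X.1 ⊆ A.1 ∧ (phi Y p.1 p.2).1 ⊆ A.1 then 1 else 0) else 0)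
        = (if p.1 ∈ Y.1 ∧ p.2 ∉ Y.1 then
          (if X.1 ⊆ A.1 ∧ Y.1 ⊆ A.1 then (1:ℝ) else 0)
            - (if X.1 ⊆ A.1 ∧ insert p.2 (Y.1.erase p.1) ⊆ A.1 then 1 else 0) else 0) :=
      ite_congr_branch (fun hc => by rw [phi_val hc])
    have r4 : (if p.2 ∈ Y.1 ∧ p.1 ∉ Y.1 then
          (if X.1 ⊆ A.1 ∧ Y.1 ⊆ A.1 then (1:ℝ) else 0)
            - (if X.1 ⊆ A.1 ∧ (phi Y p.2 p.1).1 ⊆ A.1 then 1 else 0) else 0)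
        = (if p.2 ∈ Y.1 ∧ p.1 ∉ Y.1 then
          (if X.1 ⊆ A.1 ∧ Y.1 ⊆ A.1 then (1:ℝ) else 0)
            - (if X.1 ⊆ A.1 ∧ insert p.1 (Y.1.erase p.2) ⊆ A.1 then 1 else 0) else 0) :=
      ite_congr_branch (fun hc => by rw [phi_val hc])
    rw [r1, r2, r3, r4]
    exact key_pt X.1 Y.1 A.1 hab
  have h2 : ∑ p ∈ E, (F p + F p.swap) = ∑ p ∈ E, (H p + H p.swap) :=
    Finset.sum_congr rfl key
  rw [Finset.sum_add_distrib, Finset.sum_add_distrib, ← hswap F, ← hswap H] at h2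
  linarith
end

section
/- Let m ≥ 1 and let k be an integer with 1 ≤ k ≤ m. Let K_{1,m} be the star graph with center vertex 0 and leaf vertices 1,…,m. Then the k-token graph F_k(K_{1,m}) is isomorphic to the doubled Johnson graph J(m; k−1, k), i.e., the bipartite graph whose vertex set consists of all (k−1)-subsets and all k-subsets of {1,…,m}, where two vertices are adjacent if and only if one of them is a subset of the other. An isomorphism is given by sending each k-subset A of {0,1,…,m} with 0 ∈ A to the (k−1)-subset A \ {0}, and each k-subset A with 0 ∉ A to itself. -/
open Finset Matrix
open scoped symmDiff

/-- The star graph `K_{1,m}` on `Fin (m+1)`: the center `0` is adjacent to the `m` leaves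
`1, …, m`, and there are no other edges. -/
def starGraph (m : ℕ) : SimpleGraph (Fin (m + 1)) where
  Adj u v := u ≠ v ∧ (u = 0 ∨ v = 0)
  symm := ⟨fun _ _ h => ⟨h.1.symm, h.2.symm⟩⟩
  loopless := ⟨fun _ h => h.1 rfl⟩

/-- The doubled Johnson graph `J(m; k-1, k)`: vertices are the `(k-1)`-subsets and the
`k`-subsets of `{1, …, m}` (modelled as the subsets of `Fin (m+1)` avoiding `0`), two
vertices being adjacent iff one of them is (strictly) contained in the other. -/
def doubledJohnson (m k : ℕ) :
    SimpleGraph {s : Finset (Fin (m + 1)) //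
      (0 : Fin (m + 1)) ∉ s ∧ (s.card = k - 1 ∨ s.card = k)} where
  Adj A B := A ≠ B ∧ (A.1 ⊆ B.1 ∨ B.1 ⊆ A.1)
  symm := ⟨fun _ _ h => ⟨h.1.symm, h.2.symm⟩⟩
  loopless := ⟨fun _ h => h.1 rfl⟩

private lemma aux_fwd {m : ℕ} (A B : Finset (Fin (m + 1)))
    (b : Fin (m + 1)) (hbB : b ∈ B) (hb0 : b ≠ 0) (h0A : (0 : Fin (m + 1)) ∈ A)
    (hd : A ∆ B = {0, b}) :
    A.erase 0 ≠ B.erase 0 ∧ A.erase 0 ⊆ B.erase 0 := by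
  have h0B : (0 : Fin (m + 1)) ∉ B := by
    have h0 : (0 : Fin (m + 1)) ∈ A ∆ B := by rw [hd]; simp
    rw [Finset.mem_symmDiff] at h0
    rcases h0 with ⟨_, h⟩ | ⟨_, h⟩
    · exact h
    · exact absurd h0A h
  have hbA : b ∉ A := by
    have hb : b ∈ A ∆ B := by rw [hd]; simp
    rw [Finset.mem_symmDiff] at hb
    rcases hb with ⟨_, h⟩ | ⟨_, h⟩
    · exact absurd hbB h
    · exact h
  constructor
  · intro h
    have : b ∈ A.erase 0 := h ▸ Finset.mem_erase.2 ⟨hb0, hbB⟩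
    exact hbA (Finset.mem_of_mem_erase this)
  · intro y hy
    rw [Finset.mem_erase] at hy ⊢
    refine ⟨hy.1, ?_⟩
    by_contra hyB
    have : y ∈ A ∆ B := Finset.mem_symmDiff.2 (Or.inl ⟨hy.2, hyB⟩)
    rw [hd] at this
    rcases Finset.mem_insert.1 this with h | h
    · exact hy.1 h
    · exact hbA ((Finset.mem_singleton.1 h) ▸ hy.2)

private lemma aux_back {m k : ℕ} (hk1 : 1 ≤ k) (A B : Finset (Fin (m + 1)))
    (hA : A.card = k) (hB : B.card = k)
    (hne : A.erase 0 ≠ B.erase 0) (hsub : A.erase 0 ⊆ B.erase 0) :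
    ∃ a b, a ∈ A ∧ b ∈ B ∧ (starGraph m).Adj a b ∧ A ∆ B = {a, b} := by
  set s := A.erase 0 with hs
  set t := B.erase 0 with ht
  have hslt : s.card < t.card :=
    Finset.card_lt_card (lt_of_le_of_ne hsub hne)
  have h0A : (0 : Fin (m + 1)) ∈ A := by
    by_contra h
    have h1 : s.card = k := by rw [hs, Finset.erase_eq_of_notMem h, hA]
    have h2 : t.card ≤ k := by
      rw [ht]
      calc (B.erase 0).card ≤ B.card := Finset.card_erase_le
        _ = k := hB
    omega
  have hscard : s.card = k - 1 := by rw [hs, Finset.card_erase_of_mem h0A, hA]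
  have h0B : (0 : Fin (m + 1)) ∉ B := by
    intro h
    have h2 : t.card = k - 1 := by rw [ht, Finset.card_erase_of_mem h, hB]
    omega
  have htB : t = B := by rw [ht, Finset.erase_eq_of_notMem h0B]
  have htcard : t.card = k := by rw [htB, hB]
  have hAs : A = insert 0 s := by rw [hs, Finset.insert_erase h0A]
  have hcard1 : (t \ s).card = 1 := by
    rw [Finset.card_sdiff_of_subset hsub, htcard, hscard]; omega
  obtain ⟨x, hx⟩ := Finset.card_eq_one.1 hcard1
  have hxt : x ∈ t := by
    have : x ∈ t \ s := hx ▸ Finset.mem_singleton_self x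
    exact (Finset.mem_sdiff.1 this).1
  have hxs : x ∉ s := by
    have : x ∈ t \ s := hx ▸ Finset.mem_singleton_self x
    exact (Finset.mem_sdiff.1 this).2
  have hx0 : x ≠ 0 := by
    intro h
    exact h0B (htB ▸ (h ▸ hxt))
  have htx : t = insert x s := by
    have h1 : t \ s ∪ s = t := Finset.sdiff_union_of_subset hsub
    rw [← h1, hx]
    ext y; simp [Finset.mem_insert, Finset.mem_union]
  have h0s : (0 : Fin (m + 1)) ∉ s := Finset.notMem_erase _ _
  refine ⟨0, x, h0A, htB ▸ hxt, (show _ ≠ _ ∧ _ from ⟨Ne.symm hx0, Or.inl rfl⟩), ?_⟩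
  have hBx : B = insert x s := by rw [← htB, htx]
  rw [hAs, hBx]
  ext y
  simp only [Finset.mem_symmDiff, Finset.mem_insert, Finset.mem_singleton]
  constructor
  · rintro (⟨h1, h2⟩ | ⟨h1, h2⟩)
    · rcases h1 with h1 | h1
      · exact Or.inl h1
      · exact absurd (Or.inr h1) h2
    · rcases h1 with h1 | h1
      · exact Or.inr h1
      · exact absurd (Or.inr h1) h2
  · rintro (h | h)
    · subst h
      exact Or.inl ⟨Or.inl rfl, by push_neg; exact ⟨Ne.symm hx0, h0s⟩⟩
    · subst h
      exact Or.inr ⟨Or.inl rfl, by push_neg; exact ⟨hx0, hxs⟩⟩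

/-- For `1 ≤ k ≤ m`, the `k`-token graph of the star `K_{1,m}` is
isomorphic to the doubled Johnson graph `J(m; k-1, k)`, via the map sending a `k`-subset
`A` of `{0, 1, …, m}` to `A \ {0}` (which is `A` itself when `0 ∉ A`). -/
theorem token_star_iso_doubledJohnson (m k : ℕ) (hm : 1 ≤ m) (hk1 : 1 ≤ k) (hk2 : k ≤ m) :
    ∃ φ : tokenGraph (starGraph m) k ≃g doubledJohnson m k,
      ∀ A : {s : Finset (Fin (m + 1)) // s.card = k}, (φ A).1 = A.1.erase 0 := by
  classical
  let f : {s : Finset (Fin (m + 1)) // s.card = k} →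
      {s : Finset (Fin (m + 1)) // (0 : Fin (m + 1)) ∉ s ∧ (s.card = k - 1 ∨ s.card = k)} :=
    fun A => ⟨A.1.erase 0, Finset.notMem_erase _ _, by
      by_cases h : (0 : Fin (m + 1)) ∈ A.1
      · left; rw [Finset.card_erase_of_mem h, A.2]
      · right; rw [Finset.erase_eq_of_notMem h, A.2]⟩
  let g : {s : Finset (Fin (m + 1)) // (0 : Fin (m + 1)) ∉ s ∧ (s.card = k - 1 ∨ s.card = k)} →
      {s : Finset (Fin (m + 1)) // s.card = k} :=
    fun B => if h : B.1.card = k then ⟨B.1, h⟩ else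
      ⟨insert 0 B.1, by
        rw [Finset.card_insert_of_notMem B.2.1]
        rcases B.2.2 with h' | h'
        · omega
        · exact absurd h' h⟩
  have hgf : Function.LeftInverse g f := by
    intro A
    by_cases h : (0 : Fin (m + 1)) ∈ A.1
    · have hc : (A.1.erase 0).card = k - 1 := by rw [Finset.card_erase_of_mem h, A.2]
      have hne : (A.1.erase 0).card ≠ k := by omega
      simp only [g, f, dif_neg hne]
      exact Subtype.ext (Finset.insert_erase h)
    · have hc : (A.1.erase 0).card = k := by rw [Finset.erase_eq_of_notMem h, A.2]
      simp only [g, f, dif_pos hc]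
      exact Subtype.ext (Finset.erase_eq_of_notMem h)
  have hfg : Function.RightInverse g f := by
    intro B
    by_cases h : B.1.card = k
    · simp only [g, f, dif_pos h]
      exact Subtype.ext (Finset.erase_eq_of_notMem B.2.1)
    · simp only [g, f, dif_neg h]
      exact Subtype.ext (Finset.erase_insert B.2.1)
  refine ⟨⟨⟨f, g, hgf, hfg⟩, ?_⟩, fun A => rfl⟩
  intro A B
  constructor
  · rintro (⟨hne, hsub | hsub⟩ : _ ≠ _ ∧ _)
    · exact aux_back hk1 A.1 B.1 A.2 B.2 (fun h => hne (Subtype.ext h)) hsub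
    · exact (tokenGraph (starGraph m) k).symm.symm _ _ (aux_back hk1 B.1 A.1 B.2 A.2 (fun h => hne (Subtype.ext h.symm)) hsub)
  · rintro ⟨a, b, ha, hb, (⟨hab, h0⟩ : _ ≠ _ ∧ _), hd⟩
    rcases h0 with h0 | h0
    · subst h0
      have hb0 : b ≠ 0 := fun h => hab h.symm
      obtain ⟨h1, h2⟩ := aux_fwd A.1 B.1 b hb hb0 ha hd
      exact show _ ≠ _ ∧ _ from ⟨fun h => h1 (congrArg Subtype.val h), Or.inl h2⟩
    · subst h0
      have ha0 : a ≠ 0 := hab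
      have hd' : B.1 ∆ A.1 = {0, a} := by
        rw [symmDiff_comm, hd, Finset.pair_comm]
      obtain ⟨h1, h2⟩ := aux_fwd B.1 A.1 a ha ha0 hb hd'
      exact show _ ≠ _ ∧ _ from ⟨fun h => h1 (congrArg Subtype.val h).symm, Or.inr h2⟩
end

section
/- Let G be a finite simple graph on n vertices, let Ḡ be its complement, and let k be an integer with 1 ≤ k ≤ n−1. Then the Laplacian matrices L = L(F_k(G)) and L̄ = L(F_k(Ḡ)) of the k-token graphs of G and of Ḡ commute: L L̄ = L̄ L. -/
open Finset Matrix
open scoped symmDiff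

namespace TokenCommute

variable {n k : ℕ}

/-- The permutation action on `k`-subsets. -/
def pAct (σ : Equiv.Perm (Fin n)) (A : {s : Finset (Fin n) // s.card = k}) :
    {s : Finset (Fin n) // s.card = k} :=
  ⟨A.1.map σ.toEmbedding, by rw [Finset.card_map]; exact A.2⟩

lemma pAct_pAct (σ π : Equiv.Perm (Fin n)) (A : {s : Finset (Fin n) // s.card = k}) :
    pAct σ (pAct π A) = pAct (σ * π) A := by
  apply Subtype.ext
  simp only [pAct, Finset.map_map]
  rfl

lemma pAct_one (A : {s : Finset (Fin n) // s.card = k}) : pAct 1 A = A := by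
  apply Subtype.ext
  ext x
  simp [pAct, Finset.mem_map_equiv]
  rfl

/-- Permutation matrix of the action on `k`-subsets. -/
def P (σ : Equiv.Perm (Fin n)) :
    Matrix {s : Finset (Fin n) // s.card = k} {s : Finset (Fin n) // s.card = k} ℝ :=
  Matrix.of fun A B => if pAct σ A = B then 1 else 0

lemma P_mul (σ π : Equiv.Perm (Fin n)) :
    (P σ * P π : Matrix {s : Finset (Fin n) // s.card = k} _ ℝ) = P (π * σ) := by
  ext A B
  simp only [Matrix.mul_apply, P, Matrix.of_apply, ite_mul, one_mul, zero_mul]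
  rw [Finset.sum_ite_eq Finset.univ (pAct σ A)]
  simp [pAct_pAct]

/-- `Sym2`-version of the action. -/
def qAct : Sym2 (Fin n) → {s : Finset (Fin n) // s.card = k} →
    {s : Finset (Fin n) // s.card = k} :=
  Sym2.lift ⟨fun u v => pAct (Equiv.swap u v), fun u v => by
    show pAct (Equiv.swap u v) = pAct (Equiv.swap v u)
    rw [Equiv.swap_comm]⟩

@[simp] lemma qAct_mk (u v : Fin n) :
    (qAct s(u, v) : {s : Finset (Fin n) // s.card = k} → _) = pAct (Equiv.swap u v) := rfl

/-- Matrix of `qAct`. -/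
def Qm (e : Sym2 (Fin n)) :
    Matrix {s : Finset (Fin n) // s.card = k} {s : Finset (Fin n) // s.card = k} ℝ :=
  Matrix.of fun A B => if qAct e A = B then 1 else 0

lemma Qm_mk (u v : Fin n) :
    (Qm s(u, v) : Matrix {s : Finset (Fin n) // s.card = k} _ ℝ) = P (Equiv.swap u v) := rfl

/-- Sum of all transposition matrices. -/
noncomputable def TT (n k : ℕ) :
    Matrix {s : Finset (Fin n) // s.card = k} {s : Finset (Fin n) // s.card = k} ℝ :=
  ∑ e ∈ Finset.univ.filter (fun e : Sym2 (Fin n) => ¬ e.IsDiag), Qm e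

lemma P_mul_Qm (σ : Equiv.Perm (Fin n)) (e : Sym2 (Fin n)) :
    (P σ * Qm e : Matrix {s : Finset (Fin n) // s.card = k} _ ℝ)
      = Qm (Sym2.map ⇑σ⁻¹ e) * P σ := by
  induction e using Sym2.ind with
  | _ x y =>
    rw [Sym2.map_pair_eq, Qm_mk, Qm_mk, P_mul, P_mul]
    congr 1
    have h := Equiv.swap_apply_apply σ⁻¹ x y
    rw [inv_inv] at h
    rw [h]
    group

lemma isDiag_map {σ : Equiv.Perm (Fin n)} {e : Sym2 (Fin n)} :
    (Sym2.map ⇑σ e).IsDiag ↔ e.IsDiag := by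
  induction e using Sym2.ind with
  | _ x y => simp [Sym2.map_pair_eq, Sym2.mk_isDiag_iff, σ.injective.eq_iff]

lemma P_comm_TT (σ : Equiv.Perm (Fin n)) :
    (P σ * TT n k : Matrix {s : Finset (Fin n) // s.card = k} _ ℝ) = TT n k * P σ := by
  rw [TT, Finset.mul_sum, Finset.sum_mul]
  simp only [P_mul_Qm]
  refine Finset.sum_bij' (fun e _ => Sym2.map ⇑σ⁻¹ e) (fun e _ => Sym2.map ⇑σ e) ?_ ?_ ?_ ?_ ?_
  · intro e he
    simp only [Finset.mem_filter, Finset.mem_univ, true_and] at he ⊢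
    rwa [isDiag_map]
  · intro e he
    simp only [Finset.mem_filter, Finset.mem_univ, true_and] at he ⊢
    rwa [isDiag_map]
  · intro e _
    show Sym2.map ⇑σ (Sym2.map ⇑σ⁻¹ e) = e
    rw [Sym2.map_map]
    have hid : ⇑σ ∘ ⇑σ⁻¹ = id := by funext x; simp
    rw [hid, Sym2.map_id, id_eq]
  · intro e _
    show Sym2.map ⇑σ⁻¹ (Sym2.map ⇑σ e) = e
    rw [Sym2.map_map]
    have hid : ⇑σ⁻¹ ∘ ⇑σ = id := by funext x; simp
    rw [hid, Sym2.map_id, id_eq]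
  · intro e _
    rfl

lemma Qm_comm_TT (e : Sym2 (Fin n)) :
    (Qm e * TT n k : Matrix {s : Finset (Fin n) // s.card = k} _ ℝ) = TT n k * Qm e := by
  induction e using Sym2.ind with
  | _ x y => rw [Qm_mk, P_comm_TT]

/-! ### Combinatorial core -/

lemma mem_pair_split {u v : Fin n} (huv : u ≠ v) {A B : Finset (Fin n)}
    (hcard : A.card = B.card) (h : A ∆ B = {u, v}) :
    (u ∈ A ∧ u ∉ B ∧ v ∈ B ∧ v ∉ A) ∨ (v ∈ A ∧ v ∉ B ∧ u ∈ B ∧ u ∉ A) := by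
  have hu : u ∈ A ∆ B := by rw [h]; simp
  have hv : v ∈ A ∆ B := by rw [h]; simp
  rw [Finset.mem_symmDiff] at hu hv
  have key : ∀ {C D : Finset (Fin n)}, C.card = D.card → C ∆ D = {u, v} →
      u ∈ C → u ∉ D → v ∈ C → v ∉ D → False := by
    intro C D hcd hCD huC huD hvC hvD
    have hsub : D ⊆ C := by
      intro x hx
      by_contra hxC
      have hxs : x ∈ C ∆ D := Finset.mem_symmDiff.2 (Or.inr ⟨hx, hxC⟩)
      rw [hCD, Finset.mem_insert, Finset.mem_singleton] at hxs
      rcases hxs with rfl | rfl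
      · exact huD hx
      · exact hvD hx
    have hCD' : C = D := (Finset.eq_of_subset_of_card_le hsub hcd.le).symm
    rw [hCD', symmDiff_self] at hCD
    exact Finset.insert_ne_empty u {v} hCD.symm
  rcases hu with ⟨huA, huB⟩ | ⟨huB, huA⟩ <;> rcases hv with ⟨hvA, hvB⟩ | ⟨hvB, hvA⟩
  · exact (key hcard h huA huB hvA hvB).elim
  · exact Or.inl ⟨huA, huB, hvB, hvA⟩
  · exact Or.inr ⟨hvA, hvB, huB, huA⟩
  · exact (key hcard.symm (by rw [symmDiff_comm]; exact h) huB huA hvB hvA).elim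

lemma map_swap_aux_fwd {u v : Fin n} (huv : u ≠ v) {A B : Finset (Fin n)}
    (huA : u ∈ A) (hvA : v ∉ A)
    (h : A.map (Equiv.swap u v).toEmbedding = B) : A ∆ B = {u, v} := by
  have hmem : ∀ x, x ∈ B ↔ Equiv.swap u v x ∈ A := by
    intro x
    rw [← h, Finset.mem_map_equiv, Equiv.symm_swap]
  ext x
  rw [Finset.mem_symmDiff, Finset.mem_insert, Finset.mem_singleton]
  by_cases hxu : x = u
  · subst hxu
    simp [hmem, Equiv.swap_apply_left, huA, hvA]
  by_cases hxv : x = v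
  · subst hxv
    simp [hmem, Equiv.swap_apply_right, huA, hvA]
  · simp only [hmem, Equiv.swap_apply_of_ne_of_ne hxu hxv]
    tauto

lemma map_swap_aux_bwd {u v : Fin n} (huv : u ≠ v) {A B : Finset (Fin n)}
    (huA : u ∈ A) (huB : u ∉ B) (hvB : v ∈ B) (hvA : v ∉ A)
    (h : A ∆ B = {u, v}) : A.map (Equiv.swap u v).toEmbedding = B := by
  have hoth : ∀ x, x ≠ u → x ≠ v → (x ∈ A ↔ x ∈ B) := by
    intro x hxu hxv
    have hx : x ∉ A ∆ B := by rw [h]; simp [hxu, hxv]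
    rw [Finset.mem_symmDiff] at hx
    tauto
  ext x
  rw [Finset.mem_map_equiv, Equiv.symm_swap]
  by_cases hxu : x = u
  · subst hxu
    rw [Equiv.swap_apply_left]
    simp [hvA, huB]
  by_cases hxv : x = v
  · subst hxv
    rw [Equiv.swap_apply_right]
    simp [huA, hvB]
  · rw [Equiv.swap_apply_of_ne_of_ne hxu hxv]
    exact hoth x hxu hxv

lemma map_swap_fixed {u v : Fin n} {A : Finset (Fin n)} (h : u ∈ A ↔ v ∈ A) :
    A.map (Equiv.swap u v).toEmbedding = A := by
  ext x
  rw [Finset.mem_map_equiv, Equiv.symm_swap]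
  by_cases hxu : x = u
  · subst hxu; rw [Equiv.swap_apply_left]; exact h.symm
  by_cases hxv : x = v
  · subst hxv; rw [Equiv.swap_apply_right]; exact h
  · rw [Equiv.swap_apply_of_ne_of_ne hxu hxv]

lemma map_swap_eq_iff {u v : Fin n} (huv : u ≠ v) {A B : Finset (Fin n)}
    (hcard : A.card = B.card) (hne : A ≠ B) :
    A.map (Equiv.swap u v).toEmbedding = B ↔ A ∆ B = {u, v} := by
  constructor
  · intro h
    by_cases huA : u ∈ A <;> by_cases hvA : v ∈ A
    · exact absurd ((map_swap_fixed (iff_of_true huA hvA)).symm.trans h) hne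
    · exact map_swap_aux_fwd huv huA hvA h
    · rw [Equiv.swap_comm] at h
      rw [Finset.pair_comm]
      exact map_swap_aux_fwd huv.symm hvA huA h
    · exact absurd ((map_swap_fixed (iff_of_false huA hvA)).symm.trans h) hne
  · intro h
    rcases mem_pair_split huv hcard h with ⟨h1, h2, h3, h4⟩ | ⟨h1, h2, h3, h4⟩
    · exact map_swap_aux_bwd huv h1 h2 h3 h4 h
    · rw [Equiv.swap_comm]
      exact map_swap_aux_bwd huv.symm h1 h2 h3 h4 (h.trans (Finset.pair_comm u v))

/-! ### Bridge to the token graph -/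

lemma adj_of_qAct {G : SimpleGraph (Fin n)} {u v : Fin n} (he : G.Adj u v)
    {A B : {s : Finset (Fin n) // s.card = k}}
    (hne : A ≠ B) (h : qAct s(u, v) A = B) : (tokenGraph G k).Adj A B := by
  have huv := he.ne
  have hne' : A.1 ≠ B.1 := fun hh => hne (Subtype.ext hh)
  have hcard : A.1.card = B.1.card := A.2.trans B.2.symm
  have hmap : A.1.map (Equiv.swap u v).toEmbedding = B.1 := congrArg Subtype.val h
  have hs : A.1 ∆ B.1 = {u, v} := (map_swap_eq_iff huv hcard hne').1 hmap
  rcases mem_pair_split huv hcard hs with ⟨h1, _, h3, _⟩ | ⟨h1, _, h3, _⟩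
  · exact ⟨u, v, h1, h3, he, hs⟩
  · exact ⟨v, u, h1, h3, he.symm, hs.trans (Finset.pair_comm u v)⟩

lemma qAct_of_adj {G : SimpleGraph (Fin n)} {A B : {s : Finset (Fin n) // s.card = k}}
    (h : (tokenGraph G k).Adj A B) :
    ∃ u v : Fin n, G.Adj u v ∧ A.1 ∆ B.1 = {u, v} ∧ qAct s(u, v) A = B := by
  obtain ⟨u, v, hu, hv, huv, hs⟩ := h
  have hne' : A.1 ≠ B.1 := by
    intro hh
    rw [hh, symmDiff_self] at hs
    exact Finset.insert_ne_empty u {v} hs.symm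
  have hcard : A.1.card = B.1.card := A.2.trans B.2.symm
  exact ⟨u, v, huv, hs, Subtype.ext ((map_swap_eq_iff huv.ne hcard hne').2 hs)⟩

lemma qAct_unique {e f : Sym2 (Fin n)} (he : ¬e.IsDiag) (hf : ¬f.IsDiag)
    {A B : {s : Finset (Fin n) // s.card = k}} (hne : A ≠ B)
    (h1 : qAct e A = B) (h2 : qAct f A = B) : e = f := by
  induction e using Sym2.ind with
  | _ u v =>
  induction f using Sym2.ind with
  | _ x y =>
    rw [Sym2.mk_isDiag_iff] at he hf
    have hne' : A.1 ≠ B.1 := fun hh => hne (Subtype.ext hh)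
    have hcard : A.1.card = B.1.card := A.2.trans B.2.symm
    have s1 := (map_swap_eq_iff he hcard hne').1 (congrArg Subtype.val h1)
    have s2 := (map_swap_eq_iff hf hcard hne').1 (congrArg Subtype.val h2)
    have hpair : ({u, v} : Finset (Fin n)) = {x, y} := s1.symm.trans s2
    have hu : u = x ∨ u = y := by
      have : u ∈ ({x, y} : Finset (Fin n)) := hpair ▸ Finset.mem_insert_self u {v}
      simpa using this
    have hv : v = x ∨ v = y := by
      have : v ∈ ({x, y} : Finset (Fin n)) := by
        rw [← hpair]; simp
      simpa using this
    rw [Sym2.eq_iff]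
    rcases hu with h | h <;> rcases hv with h' | h'
    · exact absurd (h.trans h'.symm) he
    · exact Or.inl ⟨h, h'⟩
    · exact Or.inr ⟨h, h'⟩
    · exact absurd (h.trans h'.symm) he

/-! ### The Laplacian decomposition -/

lemma Lap_eq_lapMatrix {V : Type*} [Fintype V] [DecidableEq V] (H : SimpleGraph V)
    [DecidableRel H.Adj] : Lap H = H.lapMatrix ℝ := by
  unfold Lap
  congr!

lemma Lap_apply {V : Type*} [Fintype V] [DecidableEq V] (H : SimpleGraph V)
    [DecidableRel H.Adj] (A B : V) :
    Lap H A B = (if A = B then (H.degree A : ℝ) else 0) - (if H.Adj A B then 1 else 0) := by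
  rw [Lap_eq_lapMatrix, SimpleGraph.lapMatrix, Matrix.sub_apply, SimpleGraph.degMatrix,
    Matrix.diagonal_apply, SimpleGraph.adjMatrix_apply]

lemma count_off {G : SimpleGraph (Fin n)} [DecidableRel G.Adj] [Fintype G.edgeSet]
    {A B : {s : Finset (Fin n) // s.card = k}} (hAB : A ≠ B)
    [DecidableRel (tokenGraph G k).Adj]
    [DecidablePred (fun e : Sym2 (Fin n) => qAct e A = B)] :
    (G.edgeFinset.filter (fun e => qAct e A = B)).card
      = if (tokenGraph G k).Adj A B then 1 else 0 := by
  classical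
  split_ifs with h
  · obtain ⟨u, v, huv, hs, hq⟩ := qAct_of_adj h
    rw [Finset.card_eq_one]
    refine ⟨s(u, v), ?_⟩
    ext f
    simp only [Finset.mem_filter, Finset.mem_singleton]
    constructor
    · rintro ⟨hfE, hfq⟩
      exact qAct_unique (G.not_isDiag_of_mem_edgeFinset hfE)
        (by simp [Sym2.mk_isDiag_iff]; exact huv.ne) hAB hfq hq
    · rintro rfl
      exact ⟨SimpleGraph.mem_edgeFinset.2 huv, hq⟩
  · rw [Finset.card_eq_zero, Finset.filter_eq_empty_iff]
    intro e heE heq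
    induction e using Sym2.ind with
    | _ u v =>
      exact h (adj_of_qAct ((G.mem_edgeSet).1 (SimpleGraph.mem_edgeFinset.1 heE)) hAB heq)

lemma count_diag {G : SimpleGraph (Fin n)} [DecidableRel G.Adj] [Fintype G.edgeSet]
    (A : {s : Finset (Fin n) // s.card = k})
    [DecidableRel (tokenGraph G k).Adj]
    [DecidablePred (fun e : Sym2 (Fin n) => qAct e A ≠ A)] :
    (G.edgeFinset.filter (fun e => qAct e A ≠ A)).card = (tokenGraph G k).degree A := by
  classical
  rw [← SimpleGraph.card_neighborFinset_eq_degree]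
  apply Finset.card_bij (fun e _ => qAct e A)
  · intro e he
    rw [Finset.mem_filter] at he
    obtain ⟨heE, hmoved⟩ := he
    rw [SimpleGraph.mem_neighborFinset]
    induction e using Sym2.ind with
    | _ u v =>
      exact adj_of_qAct ((G.mem_edgeSet).1 (SimpleGraph.mem_edgeFinset.1 heE))
        (Ne.symm hmoved) rfl
  · intro e1 h1 e2 h2 heq
    rw [Finset.mem_filter] at h1 h2
    exact qAct_unique (G.not_isDiag_of_mem_edgeFinset h1.1) (G.not_isDiag_of_mem_edgeFinset h2.1)
      (Ne.symm h2.2) heq rfl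
  · intro B hB
    rw [SimpleGraph.mem_neighborFinset] at hB
    obtain ⟨u, v, huv, hs, hq⟩ := qAct_of_adj hB
    refine ⟨s(u, v), ?_, hq⟩
    rw [Finset.mem_filter]
    refine ⟨SimpleGraph.mem_edgeFinset.2 huv, ?_⟩
    rw [hq]
    exact hB.ne'

lemma lap_token_eq (G : SimpleGraph (Fin n)) [DecidableRel G.Adj] [Fintype G.edgeSet] :
    Lap (tokenGraph G k) =
      ∑ e ∈ G.edgeFinset,
        ((1 : Matrix {s : Finset (Fin n) // s.card = k} {s : Finset (Fin n) // s.card = k} ℝ)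
          - Qm e) := by
  classical
  ext A B
  rw [Lap_apply, Matrix.sum_apply]
  simp only [Matrix.sub_apply, Matrix.one_apply, Qm, Matrix.of_apply]
  rw [Finset.sum_sub_distrib]
  by_cases hAB : A = B
  · subst hAB
    rw [if_pos rfl, if_neg ((tokenGraph G k).irrefl)]
    have h1 : (∑ _e ∈ G.edgeFinset, (if A = A then (1 : ℝ) else 0))
        = (G.edgeFinset.card : ℝ) := by simp
    rw [h1, Finset.sum_boole]
    have hsplit := Finset.card_filter_add_card_filter_not
      (s := G.edgeFinset) (p := fun e => qAct e A = A)
    have hdeg : (G.edgeFinset.filter (fun e => ¬ qAct e A = A)).card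
        = (tokenGraph G k).degree A := count_diag A
    rw [sub_zero, ← hdeg]
    have hs' : ((G.edgeFinset.filter (fun e => qAct e A = A)).card : ℝ)
        + ((G.edgeFinset.filter (fun e => ¬ qAct e A = A)).card : ℝ)
        = (G.edgeFinset.card : ℝ) := by exact_mod_cast hsplit
    linarith
  · rw [if_neg hAB]
    have hz : ∑ e ∈ G.edgeFinset, (if A = B then (1 : ℝ) else 0) = 0 := by
      simp [hAB]
    rw [hz]
    rw [Finset.sum_boole, count_off hAB]
    split_ifs <;> norm_num

/-! ### Putting it together -/

lemma smul_one_sub_comm {N : Type*} [Ring N] (a b : ℕ) (X Y : N) (h : X * Y = Y * X) :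
    (a • (1 : N) - X) * (b • 1 - Y) = (b • 1 - Y) * (a • 1 - X) := by
  rw [sub_mul, sub_mul, mul_sub, mul_sub, h]
  simp only [smul_mul_assoc, mul_smul_comm, smul_sub, mul_sub, sub_mul, one_mul, mul_one,
    smul_smul]
  rw [Nat.mul_comm a b]
  abel

lemma sum_comm_TT (s : Finset (Sym2 (Fin n))) :
    (∑ e ∈ s, Qm e : Matrix {s : Finset (Fin n) // s.card = k} _ ℝ) * TT n k
      = TT n k * ∑ e ∈ s, Qm e := by
  rw [Finset.sum_mul, Finset.mul_sum]
  exact Finset.sum_congr rfl fun e _ => Qm_comm_TT e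

lemma edge_partition (G : SimpleGraph (Fin n)) [DecidableRel G.Adj]
    [Fintype G.edgeSet] [Fintype (Gᶜ).edgeSet] :
    ((∑ e ∈ G.edgeFinset, Qm e) + ∑ e ∈ (Gᶜ).edgeFinset, Qm e :
      Matrix {s : Finset (Fin n) // s.card = k} _ ℝ) = TT n k := by
  classical
  rw [TT, ← Finset.sum_filter_add_sum_filter_not
    (Finset.univ.filter (fun e : Sym2 (Fin n) => ¬ e.IsDiag)) (fun e => e ∈ G.edgeSet) Qm]
  congr 1
  · apply Finset.sum_congr _ fun _ _ => rfl
    ext e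
    simp only [Finset.mem_filter, Finset.mem_univ, true_and, SimpleGraph.mem_edgeFinset]
    have hd := fun (h : e ∈ G.edgeSet) => G.not_isDiag_of_mem_edgeSet h
    tauto
  · apply Finset.sum_congr _ fun _ _ => rfl
    ext e
    induction e using Sym2.ind with
    | _ u v =>
      simp only [SimpleGraph.mem_edgeFinset, SimpleGraph.mem_edgeSet, Finset.mem_filter,
        Finset.mem_univ, true_and, Sym2.mk_isDiag_iff, SimpleGraph.compl_adj]

end TokenCommute

open TokenCommute in
/-- The Laplacian matrices of the `k`-token graphs of a graph `G` and of
its complement `̄G` commute: `L L̄ = L̄ L`. -/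
theorem lap_token_compl_commute (n k : ℕ) (hk1 : 1 ≤ k) (hk2 : k ≤ n - 1)
    (G : SimpleGraph (Fin n)) :
    Lap (tokenGraph G k) * Lap (tokenGraph Gᶜ k) =
      Lap (tokenGraph Gᶜ k) * Lap (tokenGraph G k) := by
  classical
  set S : Matrix {s : Finset (Fin n) // s.card = k} {s : Finset (Fin n) // s.card = k} ℝ :=
    ∑ e ∈ G.edgeFinset, Qm e with hS
  set S' : Matrix {s : Finset (Fin n) // s.card = k} {s : Finset (Fin n) // s.card = k} ℝ :=
    ∑ e ∈ (Gᶜ).edgeFinset, Qm e with hS'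
  have hpart : S + S' = TT n k := edge_partition G
  have hSc : S * TT n k = TT n k * S := sum_comm_TT _
  have hcomm : S * S' = S' * S := by
    have h1 : S * S + S * S' = S * S + S' * S := by
      have h2 : S * (S + S') = (S + S') * S := by rw [hpart]; exact hSc
      rw [mul_add, add_mul] at h2
      exact h2
    exact add_left_cancel h1
  have hG : Lap (tokenGraph G k)
      = (G.edgeFinset.card : ℕ) • (1 : Matrix _ _ ℝ) - S := by
    rw [lap_token_eq G, Finset.sum_sub_distrib, Finset.sum_const, hS]
  have hGc : Lap (tokenGraph Gᶜ k)
      = ((Gᶜ).edgeFinset.card : ℕ) • (1 : Matrix _ _ ℝ) - S' := by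
    rw [lap_token_eq (Gᶜ), Finset.sum_sub_distrib, Finset.sum_const, hS']
  rw [hG, hGc]
  exact smul_one_sub_comm _ _ _ _ hcomm
end
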